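/- Let G be a WCFG and A a WFSA over the same alphabet Σ and the same commutative semiring W, and let G∩ be the generalized Bar-Hillel grammar. For any nonterminal triplet (qI, S̄, q) of G∩ with qI ∈ I and q ∈ Q, there is a bijection ξ from the set D_{G∩}((qI,S̄,q)) of subderivations of G∩ rooted at (qI,S̄,q) to the weighted join D_G(S) ⋈ D_A({qI, q}); moreover for ξ(t∩) = ⟨t, π⟩ one has w(t∩) = w(t) ⊗ w̃(π) and yield(t∩) = yield(t) = yield(π). -/

import Mathlib

/-!
Common definitions: weighted context-free grammars (WCFGs), weighted
finite-state automata (WFSAs), leftmost derivations, paths and subpaths,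
and the (generalized and original) Bar-Hillel intersection constructions.
-/

/-- A weighted production rule `X → α / w`. -/
structure Rule (T N K : Type*) where
  lhs : N
  rhs : List (T ⊕ N)
  wt  : K

/-- A weighted context-free grammar over terminals `T`, nonterminals `N`
and weights `K`. -/
structure WCFG (T N K : Type*) where
  start : N
  rules : Set (Rule T N K)

/-- A leftmost rewrite step `α ⇒_L β` using rule `r`: the leftmost
nonterminal of `α` (everything to its left is terminal) is rewritten by `r`. -/
def StepL {T N K : Type*} (G : WCFG T N K) (r : Rule T N K)
    (α β : List (T ⊕ N)) : Prop :=
  r ∈ G.rules ∧ ∃ (z : List T) (δ : List (T ⊕ N)),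
    α = (z.map Sum.inl) ++ (Sum.inr r.lhs :: δ) ∧
    β = (z.map Sum.inl) ++ r.rhs ++ δ

/-- `DerivesL G α rs x`: starting from sentential form `α` and applying the
rules `rs` by leftmost rewriting one reaches the terminal string `x`. -/
inductive DerivesL {T N K : Type*} (G : WCFG T N K) :
    List (T ⊕ N) → List (Rule T N K) → List T → Prop
  | refl (x : List T) : DerivesL G (x.map Sum.inl) [] x
  | step {α β : List (T ⊕ N)} {r : Rule T N K} {rs : List (Rule T N K)}
      {x : List T} :
      StepL G r α β → DerivesL G β rs x → DerivesL G α (r :: rs) x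

/-- A (sub)derivation of `G` starting from the sentential form `α`,
recorded as the sequence of applied rules together with its yield. -/
structure DerivFrom {T N K : Type*} (G : WCFG T N K) (α : List (T ⊕ N)) where
  rules : List (Rule T N K)
  yield : List T
  ok : DerivesL G α rules yield

/-- The weight of a derivation: the `⊗`-product of the weights of the
applied rules. -/
def DerivFrom.weight {T N K : Type*} [CommSemiring K] {G : WCFG T N K}
    {α : List (T ⊕ N)} (d : DerivFrom G α) : K :=
  (d.rules.map Rule.wt).prod

/-- Derivations of `G` rooted at the nonterminal `X`.  (For `X = G.start`
these are exactly the derivations of `G`; note that at least one rule is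
necessarily applied.) -/
abbrev Deriv {T N K : Type*} (G : WCFG T N K) (X : N) : Type _ :=
  DerivFrom G [Sum.inr X]

/-- A weighted arc `src --lab/wt--> dst`; `lab = none` represents an ε-arc. -/
structure Arc (T Q K : Type*) where
  src : Q
  lab : Option T
  wt  : K
  dst : Q

/-- A weighted finite-state automaton over terminals `T`, states `Q` and
weights `K`; `arcs` is a finite multiset of weighted arcs, and `init`/`final`
are the initial/final weight functions. -/
structure WFSA (T Q K : Type*) where
  arcs : Multiset (Arc T Q K)
  init : Q → K
  final : Q → K

/-- `ChainFrom A p as q`: `as` is a sequence of arcs of `A` with matched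
adjacent states, leading from state `p` to state `q`. -/
inductive ChainFrom {T Q K : Type*} (A : WFSA T Q K) :
    Q → List (Arc T Q K) → Q → Prop
  | nil (q : Q) : ChainFrom A q [] q
  | cons {a : Arc T Q K} {as : List (Arc T Q K)} {q : Q} :
      a ∈ A.arcs → ChainFrom A a.dst as q → ChainFrom A a.src (a :: as) q

/-- A subpath of `A` from state `p` to state `q` (possibly empty). -/
structure SubPath {T Q K : Type*} (A : WFSA T Q K) (p q : Q) where
  arcs : List (Arc T Q K)
  ok : ChainFrom A p arcs q

/-- The yield of a subpath: the concatenation of its arc labels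
(ε contributing nothing). -/
def SubPath.yield {T Q K : Type*} {A : WFSA T Q K} {p q : Q}
    (π : SubPath A p q) : List T :=
  π.arcs.filterMap Arc.lab

/-- The inner weight `w̃(π)` of a subpath: the `⊗`-product of its arc weights
(no initial/final weights; `1̄` if empty). -/
def SubPath.weight {T Q K : Type*} [CommSemiring K] {A : WFSA T Q K} {p q : Q}
    (π : SubPath A p q) : K :=
  (π.arcs.map Arc.wt).prod

/-- An accepting path of `A`: a nonempty chained sequence of arcs starting at
an initial state (`init ≠ 0̄`) and ending at a final state (`final ≠ 0̄`). -/
structure FSAPath {T Q K : Type*} [Zero K] (A : WFSA T Q K) where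
  src : Q
  dst : Q
  arcs : List (Arc T Q K)
  ne : arcs ≠ []
  chain : ChainFrom A src arcs dst
  src_init : A.init src ≠ 0
  dst_final : A.final dst ≠ 0

/-- The yield of a path: the concatenation of its arc labels. -/
def FSAPath.yield {T Q K : Type*} [Zero K] {A : WFSA T Q K} (π : FSAPath A) : List T :=
  π.arcs.filterMap Arc.lab

/-- The weight of a path: `λ(q₀) ⊗ w₁ ⊗ ⋯ ⊗ w_N ⊗ ρ(q_N)`. -/
def FSAPath.weight {T Q K : Type*} [CommSemiring K] {A : WFSA T Q K}
    (π : FSAPath A) : K :=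
  A.init π.src * (π.arcs.map Arc.wt).prod * A.final π.dst

/-- Middle symbols of Bar-Hillel triplet nonterminals: `N ∪ {S̄} ∪ Σ ∪ {ε}`. -/
inductive BHSym (T N : Type*) where
  | nt  : N → BHSym T N
  | bar : BHSym T N
  | term : T → BHSym T N
  | eps : BHSym T N

/-- Nonterminals of the Bar-Hillel grammar:
`{S} ∪ Q × (N ∪ {S̄} ∪ Σ ∪ {ε}) × Q`. -/
inductive BHNT (T N Q : Type*) where
  | start : BHNT T N Q
  | trip : Q → BHSym T N → Q → BHNT T N Q

/-- View a grammar symbol (terminal or nonterminal) as a triplet middle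
symbol. -/
def BHSym.ofSym {T N : Type*} : T ⊕ N → BHSym T N
  | Sum.inl a => BHSym.term a
  | Sum.inr X => BHSym.nt X

/-- View an arc label (`none` = ε) as a triplet middle symbol. -/
def BHSym.ofLab {T N : Type*} : Option T → BHSym T N
  | some a => BHSym.term a
  | none   => BHSym.eps

/-- The sentential form corresponding to the root symbol of a subderivation:
a nonterminal root `X` gives `X`, a terminal root `a` gives `a`, and an
ε root gives the empty form. -/
def BHSym.form {T N : Type*} : BHSym T N → List (T ⊕ N)
  | BHSym.nt X => [Sum.inr X]
  | BHSym.term a => [Sum.inl a]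
  | BHSym.eps => []
  | BHSym.bar => []

/-- Subderivations of `G` rooted at the symbol `s ∈ N ∪ Σ ∪ {ε}`:
for a nonterminal root at least one rule is applied; for a root in
`Σ ∪ {ε}` no rule is applied, the yield is the root symbol itself and the
weight is `1̄`. -/
abbrev SubDeriv {T N K : Type*} (G : WCFG T N K) (s : BHSym T N) : Type _ :=
  DerivFrom G s.form

/-- `(q₀,X₁,q₁)(q₁,X₂,q₂)⋯(q_{M-1},X_M,q_M)` as a right-hand side of the
Bar-Hillel grammar, where the `Xᵢ` traverse `syms` and `q₁,…,q_M` traverse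
`qs`. -/
def tripRHS {T N Q : Type*} : Q → List (T ⊕ N) → List Q → List (T ⊕ BHNT T N Q)
  | _, [], _ => []
  | _, _ :: _, [] => []
  | q0, s :: ss, q :: qs => Sum.inr (BHNT.trip q0 (BHSym.ofSym s) q) :: tripRHS q ss qs

section BarHillel

variable {T N Q K : Type*} [CommSemiring K]

/-- Rule schema (a): `S → (qI,S̄,qF) / λ(qI)⊗ρ(qF)` for `qI ∈ I`, `qF ∈ F`. -/
def bhRulesStart (G : WCFG T N K) (A : WFSA T Q K) : Set (Rule T (BHNT T N Q) K) :=
  {r | ∃ qI qF : Q, A.init qI ≠ 0 ∧ A.final qF ≠ 0 ∧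
    r = ⟨BHNT.start, [Sum.inr (BHNT.trip qI BHSym.bar qF)],
         A.init qI * A.final qF⟩}

/-- Rule schema (b): `(qI,S̄,q₁) → (qI,S̄,q₀)(q₀,ε,q₁) / 1̄` for `qI ∈ I`,
`q₀,q₁ ∈ Q`. -/
def bhRulesBar (G : WCFG T N K) (A : WFSA T Q K) : Set (Rule T (BHNT T N Q) K) :=
  {r | ∃ qI q0 q1 : Q, A.init qI ≠ 0 ∧
    r = ⟨BHNT.trip qI BHSym.bar q1,
         [Sum.inr (BHNT.trip qI BHSym.bar q0), Sum.inr (BHNT.trip q0 BHSym.eps q1)],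
         1⟩}

/-- Rule schema (c): `(qI,S̄,q₀) → (qI,S,q₀) / 1̄` for `qI ∈ I`, `q₀ ∈ Q`. -/
def bhRulesExit (G : WCFG T N K) (A : WFSA T Q K) : Set (Rule T (BHNT T N Q) K) :=
  {r | ∃ qI q0 : Q, A.init qI ≠ 0 ∧
    r = ⟨BHNT.trip qI BHSym.bar q0,
         [Sum.inr (BHNT.trip qI (BHSym.nt G.start) q0)], 1⟩}

/-- Rule schema (d): `(q₀,X,q_M) → (q₀,X₁,q₁)⋯(q_{M-1},X_M,q_M) / w` for each
rule `X → X₁⋯X_M / w` of `G` with `M > 0` and all `q₀,…,q_M ∈ Q`. -/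
def bhRulesCFG (G : WCFG T N K) (A : WFSA T Q K) : Set (Rule T (BHNT T N Q) K) :=
  {r | ∃ (r₀ : Rule T N K) (q0 : Q) (qs : List Q),
    r₀ ∈ G.rules ∧ r₀.rhs ≠ [] ∧ qs.length = r₀.rhs.length ∧
    r = ⟨BHNT.trip q0 (BHSym.nt r₀.lhs) (qs.getLastD q0),
         tripRHS q0 r₀.rhs qs, r₀.wt⟩}

/-- Rule schema (e): `(q₀,X,q₀) → ε / w` for each rule `X → ε / w` of `G`
and `q₀ ∈ Q`. -/
def bhRulesNil (G : WCFG T N K) (A : WFSA T Q K) : Set (Rule T (BHNT T N Q) K) :=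
  {r | ∃ (r₀ : Rule T N K) (q : Q), r₀ ∈ G.rules ∧ r₀.rhs = [] ∧
    r = ⟨BHNT.trip q (BHSym.nt r₀.lhs) q, [], r₀.wt⟩}

/-- Rule schema (f): `(q₀,a,q₁) → a / w` for each arc `q₀ --a/w--> q₁` of `A`
with `a ∈ Σ ∪ {ε}`. -/
def bhRulesArc (G : WCFG T N K) (A : WFSA T Q K) : Set (Rule T (BHNT T N Q) K) :=
  {r | ∃ a : Arc T Q K, a ∈ A.arcs ∧
    r = ⟨BHNT.trip a.src (BHSym.ofLab a.lab) a.dst,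
         a.lab.toList.map Sum.inl, a.wt⟩}

/-- Rule schema (g): `(q₀,a,q₂) → (q₀,ε,q₁)(q₁,a,q₂) / 1̄` for all `a ∈ Σ`
and `q₀,q₁,q₂ ∈ Q`. -/
def bhRulesArcEps (G : WCFG T N K) (A : WFSA T Q K) : Set (Rule T (BHNT T N Q) K) :=
  {r | ∃ (t : T) (q0 q1 q2 : Q),
    r = ⟨BHNT.trip q0 (BHSym.term t) q2,
         [Sum.inr (BHNT.trip q0 BHSym.eps q1),
          Sum.inr (BHNT.trip q1 (BHSym.term t) q2)], 1⟩}

/-- The generalized Bar-Hillel intersection grammar `G∩` of a WCFG `G` and a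
WFSA `A` (schemas (a)–(g)). -/
def BHGrammar (G : WCFG T N K) (A : WFSA T Q K) : WCFG T (BHNT T N Q) K :=
  ⟨BHNT.start,
    bhRulesStart G A ∪ bhRulesBar G A ∪ bhRulesExit G A ∪ bhRulesCFG G A ∪
    bhRulesNil G A ∪ bhRulesArc G A ∪ bhRulesArcEps G A⟩

/-- Rule schema (a) of the original construction:
`S → (qI,S,qF) / λ(qI)⊗ρ(qF)` for `qI ∈ I`, `qF ∈ F`. -/
def obhRulesStart (G : WCFG T N K) (A : WFSA T Q K) : Set (Rule T (BHNT T N Q) K) :=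
  {r | ∃ qI qF : Q, A.init qI ≠ 0 ∧ A.final qF ≠ 0 ∧
    r = ⟨BHNT.start, [Sum.inr (BHNT.trip qI (BHSym.nt G.start) qF)],
         A.init qI * A.final qF⟩}

/-- The original (Bar-Hillel / Nederhof–Satta) intersection grammar
(schemas (a), (d), (e), (f)). -/
def OBHGrammar (G : WCFG T N K) (A : WFSA T Q K) : WCFG T (BHNT T N Q) K :=
  ⟨BHNT.start,
    obhRulesStart G A ∪ bhRulesCFG G A ∪ bhRulesNil G A ∪ bhRulesArc G A⟩

end BarHillel

section Basics

variable {T N K : Type*} {G : WCFG T N K}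

lemma inl_prefix_eq {z z' : List T} {b b' : N} {δ δ' : List (T ⊕ N)}
    (h : (z.map Sum.inl) ++ (Sum.inr b :: δ) = (z'.map Sum.inl) ++ (Sum.inr b' :: δ')) :
    z = z' ∧ b = b' ∧ δ = δ' := by
  induction z generalizing z' with
  | nil =>
    cases z' with
    | nil => simpa using h
    | cons a zs => simp at h
  | cons a zs ih =>
    cases z' with
    | nil => simp at h
    | cons a' zs' =>
      simp only [List.map_cons, List.cons_append, List.cons.injEq, Sum.inl.injEq] at h
      obtain ⟨rfl, h⟩ := h
      obtain ⟨rfl, rfl, rfl⟩ := ih h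
      exact ⟨rfl, rfl, rfl⟩

lemma stepL_det {r : Rule T N K} {α β β' : List (T ⊕ N)}
    (h : StepL G r α β) (h' : StepL G r α β') : β = β' := by
  obtain ⟨-, z, δ, hα, hβ⟩ := h
  obtain ⟨-, z', δ', hα', hβ'⟩ := h'
  obtain ⟨rfl, -, rfl⟩ := inl_prefix_eq (hα.symm.trans hα')
  rw [hβ, hβ']

lemma derivesL_terminal {z : List T} {rs : List (Rule T N K)} {x : List T}
    (h : DerivesL G (z.map Sum.inl) rs x) : rs = [] ∧ x = z := by
  generalize hα : z.map Sum.inl = α at h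
  cases h with
  | refl y => exact ⟨rfl, (List.map_injective_iff.2 Sum.inl_injective hα).symm⟩
  | @step _ β r rs x hst hd =>
    obtain ⟨-, z', δ, hα', -⟩ := hst
    rw [← hα] at hα'
    exfalso
    have hm : (Sum.inr r.lhs : T ⊕ N) ∈ List.map (Sum.inl : T → T ⊕ N) z := by
      rw [hα']; exact List.mem_append_right _ List.mem_cons_self
    simp at hm

lemma derivesL_prepend (z : List T) {β : List (T ⊕ N)} {rs : List (Rule T N K)} {x : List T}
    (h : DerivesL G β rs x) : DerivesL G (z.map Sum.inl ++ β) rs (z ++ x) := by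
  induction h with
  | refl y => rw [← List.map_append]; exact DerivesL.refl _
  | @step α β r rs x hst hd ih =>
    obtain ⟨hmem, z', δ, hα, hβ⟩ := hst
    refine DerivesL.step (β := z.map Sum.inl ++ β) ⟨hmem, z ++ z', δ, ?_, ?_⟩ ih
    · rw [hα]; simp
    · rw [hβ]; simp

lemma derivesL_append {α β : List (T ⊕ N)} {rs1 rs2 : List (Rule T N K)} {x1 x2 : List T}
    (h1 : DerivesL G α rs1 x1) (h2 : DerivesL G β rs2 x2) :
    DerivesL G (α ++ β) (rs1 ++ rs2) (x1 ++ x2) := by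
  induction h1 with
  | refl y => exact derivesL_prepend y h2
  | @step α' β' r rs x hst hd ih =>
    obtain ⟨hmem, z, δ, hα, hβ⟩ := hst
    refine DerivesL.step (β := β' ++ β) ⟨hmem, z, δ ++ β, ?_, ?_⟩ ih
    · rw [hα]; simp
    · rw [hβ]; simp

lemma derivesL_split {γ : List (T ⊕ N)} {rs : List (Rule T N K)} {x : List T}
    (h : DerivesL G γ rs x) :
    ∀ α β, γ = α ++ β → ∃ rs1 rs2 x1 x2, rs = rs1 ++ rs2 ∧ x = x1 ++ x2 ∧
      DerivesL G α rs1 x1 ∧ DerivesL G β rs2 x2 := by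
  induction h with
  | refl y =>
    intro α β hab
    obtain ⟨x1, x2, rfl, rfl, rfl⟩ := List.map_eq_append_iff.1 hab
    exact ⟨[], [], x1, x2, rfl, rfl, DerivesL.refl _, DerivesL.refl _⟩
  | @step γ γ' r rs x hst hd ih =>
    intro α β hab
    obtain ⟨hmem, z, δ, hα, hβ⟩ := hst
    rw [hab] at hα
    rcases List.append_eq_append_iff.1 hα.symm with ⟨c', hc1, hc2⟩ | ⟨a', ha1, ha2⟩
    · -- α = z.map ++ c', inr r.lhs :: δ = c' ++ β
      cases c' with
      | nil =>
        simp only [List.append_nil] at hc1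
        obtain ⟨rs1, rs2, x1, x2, rfl, rfl, hD1, hD2⟩ :=
          ih α (r.rhs ++ δ) (by rw [hβ, hc1]; simp)
        subst hc1
        obtain ⟨rfl, rfl⟩ := derivesL_terminal hD1
        refine ⟨[], r :: rs2, x1, x2, by simp, rfl, hD1, ?_⟩
        exact DerivesL.step ⟨hmem, [], δ, by simpa using hc2.symm, by simp⟩ hD2
      | cons s w =>
        rw [List.cons_append, List.cons.injEq] at hc2
        obtain ⟨hs, hδ⟩ := hc2
        obtain ⟨rs1, rs2, x1, x2, rfl, rfl, hD1, hD2⟩ :=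
          ih (z.map Sum.inl ++ r.rhs ++ w) β (by rw [hβ, hδ]; simp)
        refine ⟨r :: rs1, rs2, x1, x2, rfl, rfl, ?_, hD2⟩
        exact DerivesL.step ⟨hmem, z, w, by rw [hc1, ← hs], by simp⟩ hD1
    · -- z.map inl = α ++ a', β = a' ++ inr::δ : the rewrite happens in β
      obtain ⟨z1, z2, rfl, rfl, rfl⟩ := List.map_eq_append_iff.1 ha1
      obtain ⟨rs1, rs2, x1, x2, rfl, rfl, hD1, hD2⟩ :=
        ih (z1.map Sum.inl) (z2.map Sum.inl ++ r.rhs ++ δ)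
          (by rw [hβ]; simp)
      obtain ⟨rfl, rfl⟩ := derivesL_terminal hD1
      refine ⟨[], r :: rs2, x1, x2, by simp, rfl, hD1, ?_⟩
      exact DerivesL.step ⟨hmem, z2, δ, ha2, by simp⟩ hD2

end Basics
section Basics2

variable {T N K : Type*} {G : WCFG T N K}

lemma derivesL_nil {rs : List (Rule T N K)} {x : List T}
    (h : DerivesL G [] rs x) : rs = [] ∧ x = [] := by
  have := derivesL_terminal (z := []) (by simpa using h)
  tauto

lemma derivesL_ext {α : List (T ⊕ N)} {rs ext : List (Rule T N K)} {x x' : List T}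
    (h : DerivesL G α rs x) (h' : DerivesL G α (rs ++ ext) x') :
    ext = [] ∧ x' = x := by
  induction h generalizing x' with
  | refl y =>
    have := derivesL_terminal h'
    tauto
  | @step α β r rs x hst hd ih =>
    rw [List.cons_append] at h'
    cases h' with
    | step hst' hd' =>
      rw [stepL_det hst' hst] at hd'
      exact ih hd'

lemma derivesL_det {α : List (T ⊕ N)} {rs : List (Rule T N K)} {x x' : List T}
    (h : DerivesL G α rs x) (h' : DerivesL G α rs x') : x = x' := by
  have h'' : DerivesL G α (rs ++ []) x' := by rw [List.append_nil]; exact h'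
  exact (derivesL_ext h h'').2.symm

lemma derivesL_prefix {α : List (T ⊕ N)} {rs1 rs2 : List (Rule T N K)} {x1 x2 : List T}
    (h1 : DerivesL G α rs1 x1) (h2 : DerivesL G α rs2 x2) (hp : rs1 <+: rs2) :
    rs1 = rs2 ∧ x1 = x2 := by
  obtain ⟨ext, rfl⟩ := hp
  obtain ⟨rfl, rfl⟩ := derivesL_ext h1 h2
  simp

lemma derivesL_single {X : N} {rs : List (Rule T N K)} {x : List T}
    (h : DerivesL G [Sum.inr X] rs x) :
    ∃ r rs', rs = r :: rs' ∧ r ∈ G.rules ∧ r.lhs = X ∧ DerivesL G r.rhs rs' x := by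
  generalize hα0 : ([Sum.inr X] : List (T ⊕ N)) = α0 at h
  cases h with
  | refl =>
    exfalso
    rcases x with _ | ⟨a, ys⟩ <;> simp at hα0
  | @step _ β r rs x hst hd =>
    obtain ⟨hmem, z, δ, hα, hβ⟩ := hst
    rw [← hα0] at hα
    cases z with
    | cons a zs => simp at hα
    | nil =>
      simp only [List.map_nil, List.nil_append, List.cons.injEq] at hα
      obtain ⟨hl, hδ⟩ := hα
      refine ⟨r, rs, rfl, hmem, (Sum.inr.inj hl).symm, ?_⟩
      have hβ' : β = r.rhs := by rw [hβ, ← hδ]; simp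
      rwa [hβ'] at hd

end Basics2

section Chains

variable {T Q K : Type*} {A : WFSA T Q K}

lemma chain_append {p m r : Q} {as bs : List (Arc T Q K)}
    (h1 : ChainFrom A p as m) (h2 : ChainFrom A m bs r) :
    ChainFrom A p (as ++ bs) r := by
  induction h1 with
  | nil q => exact h2
  | cons ha hc ih => exact ChainFrom.cons ha (ih h2)

lemma chain_split {p r : Q} {as bs : List (Arc T Q K)}
    (h : ChainFrom A p (as ++ bs) r) :
    ∃ m, ChainFrom A p as m ∧ ChainFrom A m bs r := by
  induction as generalizing p with
  | nil => exact ⟨p, ChainFrom.nil p, h⟩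
  | cons a as ih =>
    cases h with
    | cons ha hc =>
      obtain ⟨m, h1, h2⟩ := ih hc
      exact ⟨m, ChainFrom.cons ha h1, h2⟩

lemma chain_nil_inv {p r : Q} (h : ChainFrom A p ([] : List (Arc T Q K)) r) : r = p := by
  generalize hl : ([] : List (Arc T Q K)) = l at h
  cases h with
  | nil => rfl
  | cons ha hc => simp at hl

lemma chain_cons_inv {p r : Q} {a : Arc T Q K} {as : List (Arc T Q K)}
    (h : ChainFrom A p (a :: as) r) :
    a ∈ A.arcs ∧ p = a.src ∧ ChainFrom A a.dst as r := by
  generalize hl : a :: as = l at h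
  cases h with
  | nil => simp at hl
  | @cons a' as' q ha hc =>
    obtain ⟨rfl, rfl⟩ : a = a' ∧ as = as' := by simpa using hl
    exact ⟨ha, rfl, hc⟩

lemma chain_det {p r r' : Q} {as : List (Arc T Q K)}
    (h : ChainFrom A p as r) (h' : ChainFrom A p as r') : r = r' := by
  induction as generalizing p with
  | nil => rw [chain_nil_inv h, chain_nil_inv h']
  | cons a as ih =>
    exact ih (chain_cons_inv h).2.2 (chain_cons_inv h').2.2

lemma chain_singleton {p r : Q} {a : Arc T Q K}
    (h : ChainFrom A p [a] r) : a ∈ A.arcs ∧ p = a.src ∧ r = a.dst := by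
  obtain ⟨ha, rfl, hc⟩ := chain_cons_inv h
  exact ⟨ha, rfl, chain_nil_inv hc⟩

lemma concat_last_eq {α : Type*} {l1 l2 : List α} {e1 e2 : α}
    (h : l1 ++ [e1] = l2 ++ [e2]) : e1 = e2 := by
  have : some e1 = some e2 := by
    rw [← List.getLast?_concat (l := l1), h, List.getLast?_concat]
  exact Option.some.inj this

/-- arcs list not ending in an ε-arc (or empty). -/
def NiceEnd (as : List (Arc T Q K)) : Prop :=
  ∀ pre e, as = pre ++ [e] → e.lab ≠ none

lemma niceEnd_nil : NiceEnd ([] : List (Arc T Q K)) := by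
  intro pre e h
  simp at h

lemma niceEnd_append {as bs : List (Arc T Q K)}
    (h1 : NiceEnd as) (h2 : NiceEnd bs) : NiceEnd (as ++ bs) := by
  rcases bs.eq_nil_or_concat with rfl | ⟨pre, e, hbs⟩
  · simpa using h1
  · rw [List.concat_eq_append] at hbs
    subst hbs
    intro pre' e' heq
    rw [← List.append_assoc] at heq
    rw [← concat_last_eq heq]
    exact h2 pre e rfl

lemma niceEnd_cons {a : Arc T Q K} {as : List (Arc T Q K)}
    (h : NiceEnd as) (hne : as ≠ []) : NiceEnd (a :: as) := by
  rcases as.eq_nil_or_concat with rfl | ⟨pre, e, hbs⟩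
  · exact absurd rfl hne
  · rw [List.concat_eq_append] at hbs
    subst hbs
    intro pre' e' heq
    rw [← List.cons_append] at heq
    rw [← concat_last_eq heq]
    exact h pre e rfl

lemma niceEnd_cons_some {a : Arc T Q K} (h : a.lab ≠ none) :
    NiceEnd [a] := by
  intro pre e heq
  have heq' : ([] : List (Arc T Q K)) ++ [a] = pre ++ [e] := by simpa using heq
  rw [← concat_last_eq heq']
  exact h

lemma niceEnd_tail {a : Arc T Q K} {as : List (Arc T Q K)}
    (h : NiceEnd (a :: as)) : NiceEnd as := by
  intro pre e heq
  exact h (a :: pre) e (by simp [heq])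

lemma niceEnd_suffix {as bs : List (Arc T Q K)}
    (h : NiceEnd (as ++ bs)) (hne : bs ≠ []) : NiceEnd bs := by
  intro pre e heq
  exact h (as ++ pre) e (by rw [heq, List.append_assoc])

lemma niceEnd_left {as bs : List (Arc T Q K)}
    (h : NiceEnd (as ++ bs)) (hb : bs = []) : NiceEnd as := by
  subst hb; simpa using h

lemma eq_nil_of_niceEnd_of_filterMap_nil {as : List (Arc T Q K)}
    (h : NiceEnd as) (hf : as.filterMap Arc.lab = []) : as = [] := by
  rcases as.eq_nil_or_concat with rfl | ⟨pre, e, hbs⟩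
  · rfl
  · rw [List.concat_eq_append] at hbs
    subst hbs
    exact absurd (List.filterMap_eq_nil_iff.1 hf e (by simp)) (h pre e rfl)
  
lemma split_arcs : ∀ (as : List (Arc T Q K)) (x1 x2 : List T),
    as.filterMap Arc.lab = x1 ++ x2 →
    ∃ as1 as2, as = as1 ++ as2 ∧ as1.filterMap Arc.lab = x1 ∧
      as2.filterMap Arc.lab = x2 ∧ (x1 = [] → as1 = []) ∧ NiceEnd as1 := by
  intro as
  induction as with
  | nil =>
    intro x1 x2 h
    simp only [List.filterMap_nil] at h
    obtain ⟨rfl, rfl⟩ := (List.append_eq_nil_iff).1 h.symm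
    exact ⟨[], [], by simp, by simp, by simp, fun _ => rfl, niceEnd_nil⟩
  | cons a as ih =>
    intro x1 x2 h
    cases x1 with
    | nil => exact ⟨[], a :: as, by simp, by simp, by simpa using h, fun _ => rfl, niceEnd_nil⟩
    | cons b x1' =>
      cases hl : a.lab with
      | none =>
        rw [List.filterMap_cons_none hl] at h
        obtain ⟨as1, as2, rfl, hf1, hf2, hnil, hnice⟩ := ih (b :: x1') x2 h
        have h1ne : as1 ≠ [] := by
          intro he; rw [he] at hf1; simp at hf1
        exact ⟨a :: as1, as2, by simp, by rw [List.filterMap_cons_none hl, hf1],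
          hf2, by simp, niceEnd_cons hnice h1ne⟩
      | some c =>
        rw [List.filterMap_cons_some hl, List.cons_append, List.cons.injEq] at h
        obtain ⟨rfl, h⟩ := h
        obtain ⟨as1, as2, rfl, hf1, hf2, hnil, hnice⟩ := ih x1' x2 h
        refine ⟨a :: as1, as2, by simp, by rw [List.filterMap_cons_some hl, hf1],
          hf2, by simp, ?_⟩
        rcases eq_or_ne x1' [] with rfl | hx
        · rw [hnil rfl]; exact niceEnd_cons_some (by simp [hl])
        · refine niceEnd_cons hnice ?_
          intro he; rw [he] at hf1; exact hx hf1.symm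

end Chains
section Enc

variable {T N Q K : Type*} [CommSemiring K]

/-- Rule schema (f) instance for an arc. -/
def frule (a : Arc T Q K) : Rule T (BHNT T N Q) K :=
  ⟨BHNT.trip a.src (BHSym.ofLab a.lab) a.dst, a.lab.toList.map Sum.inl, a.wt⟩

/-- Rule schema (g) instance. -/
def grule (q0 : Q) (t : T) (q1 q2 : Q) : Rule T (BHNT T N Q) K :=
  ⟨BHNT.trip q0 (BHSym.term t) q2,
    [Sum.inr (BHNT.trip q0 BHSym.eps q1), Sum.inr (BHNT.trip q1 (BHSym.term t) q2)], 1⟩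

/-- Rule schema (e) instance. -/
def erule (r : Rule T N K) (q : Q) : Rule T (BHNT T N Q) K :=
  ⟨BHNT.trip q (BHSym.nt r.lhs) q, [], r.wt⟩

/-- Rule schema (d) instance. -/
def drule (r : Rule T N K) (q0 : Q) (qs : List Q) : Rule T (BHNT T N Q) K :=
  ⟨BHNT.trip q0 (BHSym.nt r.lhs) (qs.getLastD q0), tripRHS q0 r.rhs qs, r.wt⟩

/-- Rule schema (c) instance. -/
def crule (G : WCFG T N K) (qI p : Q) : Rule T (BHNT T N Q) K :=
  ⟨BHNT.trip qI BHSym.bar p, [Sum.inr (BHNT.trip qI (BHSym.nt G.start) p)], 1⟩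

/-- Rule schema (b) instance. -/
def brule (qI p0 p1 : Q) : Rule T (BHNT T N Q) K :=
  ⟨BHNT.trip qI BHSym.bar p1,
    [Sum.inr (BHNT.trip qI BHSym.bar p0), Sum.inr (BHNT.trip p0 BHSym.eps p1)], 1⟩

variable (G : WCFG T N K) (A : WFSA T Q K)

lemma mem_frule {a : Arc T Q K} (ha : a ∈ A.arcs) :
    frule a ∈ (BHGrammar G A).rules :=
  Or.inl (Or.inr ⟨a, ha, rfl⟩)

lemma mem_grule (q0 : Q) (t : T) (q1 q2 : Q) :
    grule q0 t q1 q2 ∈ (BHGrammar G A).rules :=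
  Or.inr ⟨t, q0, q1, q2, rfl⟩

lemma mem_erule {r : Rule T N K} (hr : r ∈ G.rules) (hrhs : r.rhs = []) (q : Q) :
    erule r q ∈ (BHGrammar G A).rules :=
  Or.inl (Or.inl (Or.inr ⟨r, q, hr, hrhs, rfl⟩))

lemma mem_drule {r : Rule T N K} (hr : r ∈ G.rules) (hne : r.rhs ≠ []) (q0 : Q)
    {qs : List Q} (hlen : qs.length = r.rhs.length) :
    drule r q0 qs ∈ (BHGrammar G A).rules :=
  Or.inl (Or.inl (Or.inl (Or.inr ⟨r, q0, qs, hr, hne, hlen, rfl⟩)))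

lemma mem_crule {qI : Q} (hqI : A.init qI ≠ 0) (p : Q) :
    crule G qI p ∈ (BHGrammar G A).rules :=
  Or.inl (Or.inl (Or.inl (Or.inl (Or.inr ⟨qI, p, hqI, rfl⟩))))

lemma mem_brule {qI : Q} (hqI : A.init qI ≠ 0) (p0 p1 : Q) :
    brule qI p0 p1 ∈ (BHGrammar G A).rules :=
  Or.inl (Or.inl (Or.inl (Or.inl (Or.inl (Or.inr ⟨qI, p0, p1, hqI, rfl⟩)))))

mutual
/-- Structured description of the subderivations of `G∩` rooted at a
triplet nonterminal. -/
inductive Enc : Q → BHSym T N → Q → List (Rule T (BHNT T N Q) K) →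
    List (Rule T N K) → List (Arc T Q K) → Prop
  | arc (a : Arc T Q K) (ha : a ∈ A.arcs) (t : T) (hl : a.lab = some t) :
      Enc a.src (BHSym.term t) a.dst [frule a] [] [a]
  | geps (e : Arc T Q K) (he : e ∈ A.arcs) (hl : e.lab = none) (t : T) (q2 : Q)
      (rsc : List (Rule T (BHNT T N Q) K)) (as : List (Arc T Q K))
      (h : Enc e.dst (BHSym.term t) q2 rsc [] as) :
      Enc e.src (BHSym.term t) q2 (grule e.src t e.dst q2 :: frule e :: rsc) [] (e :: as)
  | nil (r : Rule T N K) (hr : r ∈ G.rules) (hrhs : r.rhs = []) (q : Q) :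
      Enc q (BHSym.nt r.lhs) q [erule r q] [r] []
  | rule (r : Rule T N K) (hr : r ∈ G.rules) (hne : r.rhs ≠ []) (q0 : Q) (qs : List Q)
      (rsc : List (Rule T (BHNT T N Q) K)) (ts : List (Rule T N K)) (as : List (Arc T Q K))
      (h : EncList q0 r.rhs qs rsc ts as) :
      Enc q0 (BHSym.nt r.lhs) (qs.getLastD q0) (drule r q0 qs :: rsc) (r :: ts) as

/-- List version of `Enc` for right-hand sides of rules. -/
inductive EncList : Q → List (T ⊕ N) → List Q → List (Rule T (BHNT T N Q) K) →
    List (Rule T N K) → List (Arc T Q K) → Prop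
  | nil (q : Q) : EncList q [] [] [] [] []
  | cons (q0 : Q) (s : T ⊕ N) (q1 : Q) (ss : List (T ⊕ N)) (qs : List Q)
      (rsc1 rsc2 : List (Rule T (BHNT T N Q) K)) (ts1 ts2 : List (Rule T N K))
      (as1 as2 : List (Arc T Q K))
      (h1 : Enc q0 (BHSym.ofSym s) q1 rsc1 ts1 as1)
      (h2 : EncList q1 ss qs rsc2 ts2 as2) :
      EncList q0 (s :: ss) (q1 :: qs) (rsc1 ++ rsc2) (ts1 ++ ts2) (as1 ++ as2)
end

/-- Structured description of the subderivations of `G∩` rooted at a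
bar triplet `(qI, S̄, p)`. -/
inductive EncBar (qI : Q) : Q → List (Rule T (BHNT T N Q) K) →
    List (Rule T N K) → List (Arc T Q K) → Prop
  | base (p : Q) (rsc : List (Rule T (BHNT T N Q) K)) (ts : List (Rule T N K))
      (as : List (Arc T Q K)) (h : Enc G A qI (BHSym.nt G.start) p rsc ts as) :
      EncBar qI p (crule G qI p :: rsc) ts as
  | step (e : Arc T Q K) (he : e ∈ A.arcs) (hl : e.lab = none)
      (rsc : List (Rule T (BHNT T N Q) K)) (ts : List (Rule T N K))
      (as : List (Arc T Q K)) (h : EncBar qI e.src rsc ts as) :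
      EncBar qI e.dst (brule qI e.src e.dst :: rsc ++ [frule e]) ts (as ++ [e])

lemma form_ofSym (s : T ⊕ N) : (BHSym.ofSym s).form = [s] := by
  cases s <;> rfl

lemma enc_ne {q0 : Q} {s : BHSym T N} {q1 : Q} {rsc ts as}
    (h : Enc G A q0 s q1 rsc ts as) : rsc ≠ [] := by
  cases h <;> simp

lemma enc_head {q0 : Q} {s : BHSym T N} {q1 : Q} {rsc ts as}
    (h : Enc G A q0 s q1 rsc ts as) :
    ∃ r rsc', rsc = r :: rsc' ∧ Rule.lhs r = BHNT.trip q0 s q1 := by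
  cases h with
  | arc a ha t hl => exact ⟨_, _, rfl, by simp [frule, hl, BHSym.ofLab]⟩
  | geps e he hl t q2 rsc as h => exact ⟨_, _, rfl, rfl⟩
  | nil r hr hrhs q => exact ⟨_, _, rfl, rfl⟩
  | rule r hr hne q0 qs rsc ts as h => exact ⟨_, _, rfl, rfl⟩

lemma derivesL_eps_triple {e : Arc T Q K} (he : e ∈ A.arcs) (hl : e.lab = none) :
    DerivesL (BHGrammar G A) [Sum.inr (BHNT.trip e.src BHSym.eps e.dst)] [frule e] [] := by
  refine DerivesL.step (β := []) ⟨mem_frule G A he, [], [], ?_, ?_⟩ (DerivesL.refl [])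
  · simp [frule, hl, BHSym.ofLab]
  · simp [frule, hl]

lemma derivesL_term_arc {a : Arc T Q K} {t : T} (ha : a ∈ A.arcs) (hl : a.lab = some t) :
    DerivesL (BHGrammar G A) [Sum.inr (BHNT.trip a.src (BHSym.term t) a.dst)] [frule a] [t] := by
  refine DerivesL.step (β := [Sum.inl t]) ⟨mem_frule G A ha, [], [], ?_, ?_⟩
    (DerivesL.refl [t])
  · simp [frule, hl, BHSym.ofLab]
  · simp [frule, hl]

end Enc
section Inv

variable {T N Q K : Type*} [CommSemiring K] (G : WCFG T N K) (A : WFSA T Q K)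

lemma enc_inv {q0 : Q} {s : BHSym T N} {q1 : Q} {rsc ts as}
    (h : Enc G A q0 s q1 rsc ts as) :
    (∃ a t, a ∈ A.arcs ∧ a.lab = some t ∧ q0 = a.src ∧ s = BHSym.term t ∧ q1 = a.dst ∧
        rsc = [frule a] ∧ ts = [] ∧ as = [a]) ∨
    (∃ e t rsc' as', e ∈ A.arcs ∧ e.lab = none ∧ q0 = e.src ∧ s = BHSym.term t ∧
        rsc = grule e.src t e.dst q1 :: frule e :: rsc' ∧ ts = [] ∧ as = e :: as' ∧
        Enc G A e.dst (BHSym.term t) q1 rsc' [] as') ∨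
    (∃ r, r ∈ G.rules ∧ r.rhs = [] ∧ s = BHSym.nt r.lhs ∧ q1 = q0 ∧
        rsc = [erule r q0] ∧ ts = [r] ∧ as = []) ∨
    (∃ r qs rsc' ts', r ∈ G.rules ∧ r.rhs ≠ [] ∧ s = BHSym.nt r.lhs ∧
        q1 = qs.getLastD q0 ∧ rsc = drule r q0 qs :: rsc' ∧ ts = r :: ts' ∧
        EncList G A q0 r.rhs qs rsc' ts' as) := by
  cases h with
  | arc a ha t hl => exact Or.inl ⟨a, t, ha, hl, rfl, rfl, rfl, rfl, rfl, rfl⟩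
  | geps e he hl t q2 rsc as h =>
      exact Or.inr (Or.inl ⟨e, t, rsc, as, he, hl, rfl, rfl, rfl, rfl, rfl, h⟩)
  | nil r hr hrhs q => exact Or.inr (Or.inr (Or.inl ⟨r, hr, hrhs, rfl, rfl, rfl, rfl, rfl⟩))
  | rule r hr hne q0 qs rsc ts as h =>
      exact Or.inr (Or.inr (Or.inr ⟨r, qs, rsc, ts, hr, hne, rfl, rfl, rfl, rfl, h⟩))

lemma encList_nil_inv {q0 : Q} {qs : List Q} {rsc ts as}
    (h : EncList G A q0 [] qs rsc ts as) :
    qs = [] ∧ rsc = [] ∧ ts = [] ∧ as = [] := by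
  cases h
  exact ⟨rfl, rfl, rfl, rfl⟩

lemma encList_cons_inv {q0 : Q} {s : T ⊕ N} {ss : List (T ⊕ N)} {qs : List Q} {rsc ts as}
    (h : EncList G A q0 (s :: ss) qs rsc ts as) :
    ∃ q1 qs' rsc1 rsc2 ts1 ts2 as1 as2, qs = q1 :: qs' ∧ rsc = rsc1 ++ rsc2 ∧
      ts = ts1 ++ ts2 ∧ as = as1 ++ as2 ∧ Enc G A q0 (BHSym.ofSym s) q1 rsc1 ts1 as1 ∧
      EncList G A q1 ss qs' rsc2 ts2 as2 := by
  cases h with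
  | cons q0 s q1 ss qs rsc1 rsc2 ts1 ts2 as1 as2 h1 h2 =>
      exact ⟨q1, qs, rsc1, rsc2, ts1, ts2, as1, as2, rfl, rfl, rfl, rfl, h1, h2⟩

lemma encBar_inv {qI p : Q} {rsc ts as} (h : EncBar G A qI p rsc ts as) :
    (∃ rsc', rsc = crule G qI p :: rsc' ∧ Enc G A qI (BHSym.nt G.start) p rsc' ts as) ∨
    (∃ e rsc' as', e ∈ A.arcs ∧ e.lab = none ∧ p = e.dst ∧
      rsc = brule qI e.src e.dst :: rsc' ++ [frule e] ∧ as = as' ++ [e] ∧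
      EncBar G A qI e.src rsc' ts as') := by
  cases h with
  | base p rsc ts as h => exact Or.inl ⟨rsc, rfl, h⟩
  | step e he hl rsc ts as h => exact Or.inr ⟨e, rsc, as, he, hl, rfl, rfl, rfl, h⟩

end Inv
section Sound

variable {T N Q K : Type*} [CommSemiring K] (G : WCFG T N K) (A : WFSA T Q K)

/-- Soundness data for `Enc`. -/
def EncOK (q0 : Q) (s : BHSym T N) (q1 : Q) (rsc : List (Rule T (BHNT T N Q) K))
    (ts : List (Rule T N K)) (as : List (Arc T Q K)) : Prop :=
  ChainFrom A q0 as q1 ∧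
  DerivesL G s.form ts (as.filterMap Arc.lab) ∧
  DerivesL (BHGrammar G A) [Sum.inr (BHNT.trip q0 s q1)] rsc (as.filterMap Arc.lab) ∧
  (rsc.map Rule.wt).prod = (ts.map Rule.wt).prod * (as.map Arc.wt).prod ∧
  NiceEnd as

/-- Soundness data for `EncList`. -/
def EncListOK (q0 : Q) (syms : List (T ⊕ N)) (qs : List Q)
    (rsc : List (Rule T (BHNT T N Q) K))
    (ts : List (Rule T N K)) (as : List (Arc T Q K)) : Prop :=
  ChainFrom A q0 as (qs.getLastD q0) ∧
  DerivesL G syms ts (as.filterMap Arc.lab) ∧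
  DerivesL (BHGrammar G A) (tripRHS q0 syms qs) rsc (as.filterMap Arc.lab) ∧
  (rsc.map Rule.wt).prod = (ts.map Rule.wt).prod * (as.map Arc.wt).prod ∧
  NiceEnd as ∧ qs.length = syms.length

lemma enc_sound_aux : ∀ n : ℕ,
    (∀ (q0 : Q) (s : BHSym T N) (q1 : Q) rsc ts as, rsc.length ≤ n →
      Enc G A q0 s q1 rsc ts as → EncOK G A q0 s q1 rsc ts as) ∧
    (∀ (q0 : Q) syms qs rsc ts as, rsc.length ≤ n →
      EncList G A q0 syms qs rsc ts as → EncListOK G A q0 syms qs rsc ts as) := by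
  intro n
  induction n using Nat.strong_induction_on with
  | _ n IH =>
  have hsingle : ∀ (q0 : Q) (s : BHSym T N) (q1 : Q) rsc ts as, rsc.length ≤ n →
      Enc G A q0 s q1 rsc ts as → EncOK G A q0 s q1 rsc ts as := by
    intro q0 s q1 rsc ts as hlen henc
    rcases enc_inv G A henc with
        ⟨a, t, ha, hl, rfl, rfl, rfl, rfl, rfl, rfl⟩ |
        ⟨e, t, rsc', as', he, hl, rfl, rfl, rfl, rfl, rfl, h⟩ |
        ⟨r, hr, hrhs, rfl, rfl, rfl, rfl, rfl⟩ |
        ⟨r, qs, rsc', ts', hr, hne, rfl, rfl, rfl, rfl, hlst⟩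
    · refine ⟨ChainFrom.cons ha (ChainFrom.nil _), ?_, ?_, by simp [frule], 
        niceEnd_cons_some (by simp [hl])⟩
      · show DerivesL G ([t].map Sum.inl) [] _
        rw [List.filterMap_cons_some hl, List.filterMap_nil]
        exact DerivesL.refl [t]
      · rw [List.filterMap_cons_some hl, List.filterMap_nil]
        exact derivesL_term_arc G A ha hl
    · have hrec := (IH rsc'.length (by simp at hlen; omega)).1 _ _ _ _ _ _ le_rfl h
      obtain ⟨hchain, hG, hcap, hwt, hnice⟩ := hrec
      refine ⟨ChainFrom.cons he hchain, ?_, ?_, ?_, ?_⟩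
      · rwa [List.filterMap_cons_none hl]
      · rw [List.filterMap_cons_none hl]
        refine DerivesL.step (β := [Sum.inr (BHNT.trip e.src BHSym.eps e.dst),
          Sum.inr (BHNT.trip e.dst (BHSym.term t) q1)])
          ⟨mem_grule G A e.src t e.dst q1, [], [], rfl, by simp [grule]⟩ ?_
        have := derivesL_append (derivesL_eps_triple G A he hl) hcap
        simpa using this
      · simp only [List.map_cons, List.prod_cons, grule, frule, hwt]
        simp
      · refine niceEnd_cons hnice ?_
        intro hne; rw [hne] at hG
        simp only [List.filterMap_nil] at hG
        obtain ⟨-, h2⟩ := derivesL_terminal (z := [t]) (by simpa [BHSym.form] using hG)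
        simp at h2
    · refine ⟨ChainFrom.nil _, ?_, ?_, by simp [erule], niceEnd_nil⟩
      · simp only [List.filterMap_nil]
        refine DerivesL.step (β := []) ⟨hr, [], [], rfl, by simp [hrhs]⟩ (DerivesL.refl [])
      · simp only [List.filterMap_nil]
        refine DerivesL.step (β := []) ⟨mem_erule G A hr hrhs _, [], [], rfl, by simp [erule]⟩
          (DerivesL.refl [])
    · have hrec := (IH rsc'.length (by simp at hlen; omega)).2 _ _ _ _ _ _ le_rfl hlst
      obtain ⟨hchain, hG, hcap, hwt, hnice, hqlen⟩ := hrec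
      refine ⟨hchain, ?_, ?_, ?_, hnice⟩
      · exact DerivesL.step (β := r.rhs) ⟨hr, [], [], rfl, by simp⟩ hG
      · exact DerivesL.step (β := tripRHS q0 r.rhs qs)
          ⟨mem_drule G A hr hne q0 hqlen, [], [], rfl, by simp [drule]⟩ hcap
      · simp only [List.map_cons, List.prod_cons, drule, hwt]; ring
  refine ⟨hsingle, ?_⟩
  intro q0 syms qs rsc ts as hlen hencl
  induction syms generalizing q0 qs rsc ts as with
  | nil =>
    obtain ⟨rfl, rfl, rfl, rfl⟩ := encList_nil_inv G A hencl
    exact ⟨ChainFrom.nil _, DerivesL.refl [], DerivesL.refl [], by simp, niceEnd_nil, rfl⟩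
  | cons s ss ihs =>
    obtain ⟨q1, qs', rsc1, rsc2, ts1, ts2, as1, as2, rfl, rfl, rfl, rfl, h1, h2⟩ :=
      encList_cons_inv G A hencl
    have hok1 := hsingle _ _ _ _ _ _ (by simp at hlen ⊢; omega) h1
    have hok2 := ihs _ _ _ _ _ (by simp at hlen ⊢; omega) h2
    obtain ⟨hc1, hG1, hcap1, hwt1, hn1⟩ := hok1
    obtain ⟨hc2, hG2, hcap2, hwt2, hn2, hql⟩ := hok2
    refine ⟨?_, ?_, ?_, ?_, niceEnd_append hn1 hn2, by simp [hql]⟩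
    · rw [List.getLastD_cons]
      exact chain_append hc1 hc2
    · rw [List.filterMap_append]
      have := derivesL_append (by rwa [form_ofSym] at hG1 : DerivesL G [s] ts1 _) hG2
      simpa using this
    · rw [List.filterMap_append]
      show DerivesL (BHGrammar G A)
        ([Sum.inr (BHNT.trip q0 (BHSym.ofSym s) q1)] ++ tripRHS q1 ss qs') _ _
      exact derivesL_append hcap1 hcap2
    · simp only [List.map_append, List.prod_append, hwt1, hwt2]; ring

lemma enc_sound {q0 : Q} {s : BHSym T N} {q1 : Q} {rsc ts as}
    (h : Enc G A q0 s q1 rsc ts as) : EncOK G A q0 s q1 rsc ts as :=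
  (enc_sound_aux G A rsc.length).1 _ _ _ _ _ _ le_rfl h

lemma encList_sound {q0 : Q} {syms : List (T ⊕ N)} {qs : List Q} {rsc ts as}
    (h : EncList G A q0 syms qs rsc ts as) : EncListOK G A q0 syms qs rsc ts as :=
  (enc_sound_aux G A rsc.length).2 _ _ _ _ _ _ le_rfl h

/-- Soundness for `EncBar`. -/
lemma encBar_sound {qI : Q} (hqI : A.init qI ≠ 0) {p : Q} {rsc ts as}
    (h : EncBar G A qI p rsc ts as) :
    ChainFrom A qI as p ∧
    DerivesL G [Sum.inr G.start] ts (as.filterMap Arc.lab) ∧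
    DerivesL (BHGrammar G A) [Sum.inr (BHNT.trip qI BHSym.bar p)] rsc
      (as.filterMap Arc.lab) ∧
    (rsc.map Rule.wt).prod = (ts.map Rule.wt).prod * (as.map Arc.wt).prod := by
  induction h with
  | base p rsc ts as h =>
    obtain ⟨hchain, hG, hcap, hwt, -⟩ := enc_sound G A h
    refine ⟨hchain, by simpa [BHSym.form] using hG, ?_, by simpa [crule] using hwt⟩
    exact DerivesL.step (β := [Sum.inr (BHNT.trip qI (BHSym.nt G.start) p)])
      ⟨mem_crule G A hqI p, [], [], rfl, by simp [crule]⟩ hcap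
  | step e he hl rsc ts as h ih =>
    obtain ⟨hchain, hG, hcap, hwt⟩ := ih
    have hfm : (as ++ [e]).filterMap Arc.lab = as.filterMap Arc.lab := by
      simp [List.filterMap_append, hl]
    refine ⟨chain_append hchain (ChainFrom.cons he (ChainFrom.nil _)), by rwa [hfm], ?_, ?_⟩
    · rw [hfm]
      refine DerivesL.step (β := [Sum.inr (BHNT.trip qI BHSym.bar e.src)] ++
          [Sum.inr (BHNT.trip e.src BHSym.eps e.dst)])
        ⟨mem_brule G A hqI e.src e.dst, [], [], rfl, by simp [brule]⟩ ?_
      have := derivesL_append hcap (derivesL_eps_triple G A he hl)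
      simpa using this
    · simp only [List.map_cons, List.map_append, List.prod_cons, List.prod_append,
        brule, frule, hwt]
      simp; ring

end Sound
section Decode

variable {T N Q K : Type*} [CommSemiring K] (G : WCFG T N K) (A : WFSA T Q K)

lemma bh_rule_cases {r : Rule T (BHNT T N Q) K} (hmem : r ∈ (BHGrammar G A).rules)
    {p : Q} {s : BHSym T N} {p' : Q} (hlhs : r.lhs = BHNT.trip p s p') :
    (∃ a, a ∈ A.arcs ∧ p = a.src ∧ s = BHSym.ofLab a.lab ∧ p' = a.dst ∧ r = frule a) ∨
    (∃ t q1, s = BHSym.term t ∧ r = grule p t q1 p') ∨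
    (∃ r₀, r₀ ∈ G.rules ∧ r₀.rhs = [] ∧ s = BHSym.nt r₀.lhs ∧ p' = p ∧ r = erule r₀ p) ∨
    (∃ r₀ qs, r₀ ∈ G.rules ∧ r₀.rhs ≠ [] ∧ qs.length = r₀.rhs.length ∧
      s = BHSym.nt r₀.lhs ∧ p' = qs.getLastD p ∧ r = drule r₀ p qs) ∨
    (∃ p0, s = BHSym.bar ∧ r = brule p p0 p' ∧ A.init p ≠ 0) ∨
    (s = BHSym.bar ∧ r = crule G p p' ∧ A.init p ≠ 0) := by
  rcases hmem with ((((((⟨qI, qF, hi, hf, rfl⟩ | ⟨qI, p0, p1, hi, rfl⟩) |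
      ⟨qI, q0, hi, rfl⟩) | ⟨r₀, q0, qs, hr, hne, hlen, rfl⟩) | ⟨r₀, q0, hr, hrhs, rfl⟩) |
      ⟨a, ha, rfl⟩) | ⟨t, q0, q1, q2, rfl⟩)
  · simp at hlhs
  · simp only [BHNT.trip.injEq] at hlhs
    obtain ⟨rfl, rfl, rfl⟩ := hlhs
    exact Or.inr (Or.inr (Or.inr (Or.inr (Or.inl ⟨p0, rfl, rfl, hi⟩))))
  · simp only [BHNT.trip.injEq] at hlhs
    obtain ⟨rfl, rfl, rfl⟩ := hlhs
    exact Or.inr (Or.inr (Or.inr (Or.inr (Or.inr ⟨rfl, rfl, hi⟩))))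
  · simp only [BHNT.trip.injEq] at hlhs
    obtain ⟨rfl, rfl, rfl⟩ := hlhs
    exact Or.inr (Or.inr (Or.inr (Or.inl ⟨r₀, qs, hr, hne, hlen, rfl, rfl, rfl⟩)))
  · simp only [BHNT.trip.injEq] at hlhs
    obtain ⟨rfl, rfl, rfl⟩ := hlhs
    exact Or.inr (Or.inr (Or.inl ⟨r₀, hr, hrhs, rfl, rfl, rfl⟩))
  · simp only [BHNT.trip.injEq] at hlhs
    obtain ⟨rfl, rfl, rfl⟩ := hlhs
    exact Or.inl ⟨a, ha, rfl, rfl, rfl, rfl⟩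
  · simp only [BHNT.trip.injEq] at hlhs
    obtain ⟨rfl, rfl, rfl⟩ := hlhs
    exact Or.inr (Or.inl ⟨t, q1, rfl, rfl⟩)

lemma decode_eps {p p' : Q} {rsc x}
    (h : DerivesL (BHGrammar G A) [Sum.inr (BHNT.trip p BHSym.eps p')] rsc x) :
    ∃ e, e ∈ A.arcs ∧ e.lab = none ∧ p = e.src ∧ p' = e.dst ∧
      rsc = [frule e] ∧ x = [] := by
  obtain ⟨r, rsc', rfl, hmem, hlhs, hrest⟩ := derivesL_single h
  rcases bh_rule_cases G A hmem hlhs with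
      ⟨a, ha, rfl, hofl, rfl, rfl⟩ | ⟨t, q1, heq, -⟩ | ⟨r₀, -, -, heq, -⟩ |
      ⟨r₀, qs, -, -, -, heq, -⟩ | ⟨p0, heq, -⟩ | ⟨heq, -⟩
  · cases hla : a.lab with
    | some t => rw [hla] at hofl; simp [BHSym.ofLab] at hofl
    | none =>
      have hrhs : (frule a : Rule T (BHNT T N Q) K).rhs = [] := by simp [frule, hla]
      rw [hrhs] at hrest
      obtain ⟨rfl, rfl⟩ := derivesL_nil hrest
      exact ⟨a, ha, hla, rfl, rfl, rfl, rfl⟩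
  all_goals simp at heq

lemma decode_aux : ∀ n : ℕ,
    (∀ rsc : List (Rule T (BHNT T N Q) K), rsc.length ≤ n → ∀ (p p' : Q) (t : T) x,
        DerivesL (BHGrammar G A) [Sum.inr (BHNT.trip p (BHSym.term t) p')] rsc x →
        ∃ as, Enc G A p (BHSym.term t) p' rsc [] as) ∧
    (∀ rsc : List (Rule T (BHNT T N Q) K), rsc.length ≤ n → ∀ (p p' : Q) (X : N) x,
        DerivesL (BHGrammar G A) [Sum.inr (BHNT.trip p (BHSym.nt X) p')] rsc x →
        ∃ ts as, Enc G A p (BHSym.nt X) p' rsc ts as) ∧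
    (∀ rsc : List (Rule T (BHNT T N Q) K), rsc.length ≤ n →
        ∀ (q0 : Q) syms (qs : List Q) x, qs.length = syms.length →
        DerivesL (BHGrammar G A) (tripRHS q0 syms qs) rsc x →
        ∃ ts as, EncList G A q0 syms qs rsc ts as) := by
  have hlistaux : ∀ m : ℕ,
      (∀ rsc : List (Rule T (BHNT T N Q) K), rsc.length ≤ m → ∀ (p p' : Q) (t : T) x,
        DerivesL (BHGrammar G A) [Sum.inr (BHNT.trip p (BHSym.term t) p')] rsc x →
        ∃ as, Enc G A p (BHSym.term t) p' rsc [] as) →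
      (∀ rsc : List (Rule T (BHNT T N Q) K), rsc.length ≤ m → ∀ (p p' : Q) (X : N) x,
        DerivesL (BHGrammar G A) [Sum.inr (BHNT.trip p (BHSym.nt X) p')] rsc x →
        ∃ ts as, Enc G A p (BHSym.nt X) p' rsc ts as) →
      (∀ rsc : List (Rule T (BHNT T N Q) K), rsc.length ≤ m →
        ∀ (q0 : Q) syms (qs : List Q) x, qs.length = syms.length →
        DerivesL (BHGrammar G A) (tripRHS q0 syms qs) rsc x →
        ∃ ts as, EncList G A q0 syms qs rsc ts as) := by
    intro m hterm hnt rsc hlen q0 syms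
    induction syms generalizing rsc q0 with
    | nil =>
      intro qs x hql h
      have hqs : qs = [] := List.length_eq_zero_iff.1 hql
      subst hqs
      have : tripRHS (T := T) (N := N) q0 [] ([] : List Q) = [] := rfl
      rw [this] at h
      obtain ⟨rfl, rfl⟩ := derivesL_nil h
      exact ⟨[], [], EncList.nil q0⟩
    | cons s ss ihs =>
      intro qs x hql h
      cases qs with
      | nil => simp at hql
      | cons q1 qs' =>
        have : tripRHS q0 (s :: ss) (q1 :: qs') =
            [Sum.inr (BHNT.trip q0 (BHSym.ofSym s) q1)] ++ tripRHS q1 ss qs' := rfl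
        rw [this] at h
        obtain ⟨rsc1, rsc2, x1, x2, rfl, rfl, hD1, hD2⟩ := derivesL_split h _ _ rfl
        have hl1 : rsc1.length ≤ m := by
          have := List.length_append (as := rsc1) (bs := rsc2) ▸ hlen; omega
        have hl2 : rsc2.length ≤ m := by
          have := List.length_append (as := rsc1) (bs := rsc2) ▸ hlen; omega
        have henc1 : ∃ ts1 as1, Enc G A q0 (BHSym.ofSym s) q1 rsc1 ts1 as1 := by
          cases s with
          | inl t =>
            obtain ⟨as1, h1⟩ := hterm rsc1 hl1 q0 q1 t x1 hD1
            exact ⟨[], as1, h1⟩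
          | inr X => exact hnt rsc1 hl1 q0 q1 X x1 hD1
        obtain ⟨ts1, as1, henc1⟩ := henc1
        obtain ⟨ts2, as2, henc2⟩ := ihs rsc2 hl2 q1 qs' x2 (by simpa using hql) hD2
        exact ⟨ts1 ++ ts2, as1 ++ as2,
          EncList.cons q0 s q1 ss qs' rsc1 rsc2 ts1 ts2 as1 as2 henc1 henc2⟩
  intro n
  induction n using Nat.strong_induction_on with
  | _ n IH =>
  have hterm : ∀ rsc : List (Rule T (BHNT T N Q) K), rsc.length ≤ n → ∀ (p p' : Q) (t : T) x,
      DerivesL (BHGrammar G A) [Sum.inr (BHNT.trip p (BHSym.term t) p')] rsc x →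
      ∃ as, Enc G A p (BHSym.term t) p' rsc [] as := by
    intro rsc hlen p p' t x h
    obtain ⟨r, rsc', rfl, hmem, hlhs, hrest⟩ := derivesL_single h
    rcases bh_rule_cases G A hmem hlhs with
        ⟨a, ha, rfl, hofl, rfl, rfl⟩ | ⟨t', q1, heq, rfl⟩ | ⟨r₀, -, -, heq, -⟩ |
        ⟨r₀, qs, -, -, -, heq, -⟩ | ⟨p0, heq, -⟩ | ⟨heq, -⟩
    · cases hla : a.lab with
      | none => rw [hla] at hofl; simp [BHSym.ofLab] at hofl
      | some t' =>
        rw [hla] at hofl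
        simp only [BHSym.ofLab, BHSym.term.injEq] at hofl
        subst hofl
        have hrhs : (frule a : Rule T (BHNT T N Q) K).rhs = [Sum.inl t] := by
          simp [frule, hla]
        rw [hrhs] at hrest
        obtain ⟨rfl, rfl⟩ := derivesL_terminal (z := [t]) hrest
        exact ⟨[a], Enc.arc a ha t hla⟩
    · -- g-rule
      obtain rfl := (show t = t' by simpa using heq)
      have hrhs : (grule (N := N) (K := K) p t q1 p').rhs =
          [Sum.inr (BHNT.trip p BHSym.eps q1)] ++
          [Sum.inr (BHNT.trip q1 (BHSym.term t) p')] := rfl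
      rw [hrhs] at hrest
      obtain ⟨rsc1, rsc2, x1, x2, rfl, rfl, hD1, hD2⟩ := derivesL_split hrest _ _ rfl
      obtain ⟨e, he, hel, rfl, rfl, rfl, rfl⟩ := decode_eps G A hD1
      have hl2 : rsc2.length < n := by
        simp only [List.length_cons, List.length_append, List.length_singleton] at hlen ⊢
        omega
      obtain ⟨as2, henc2⟩ := (IH rsc2.length hl2).1 rsc2 le_rfl e.dst p' t x2 hD2
      exact ⟨e :: as2, Enc.geps e he hel t p' rsc2 as2 henc2⟩
    all_goals simp at heq
  have hnt : ∀ rsc : List (Rule T (BHNT T N Q) K), rsc.length ≤ n → ∀ (p p' : Q) (X : N) x,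
      DerivesL (BHGrammar G A) [Sum.inr (BHNT.trip p (BHSym.nt X) p')] rsc x →
      ∃ ts as, Enc G A p (BHSym.nt X) p' rsc ts as := by
    intro rsc hlen p p' X x h
    obtain ⟨r, rsc', rfl, hmem, hlhs, hrest⟩ := derivesL_single h
    rcases bh_rule_cases G A hmem hlhs with
        ⟨a, ha, rfl, hofl, rfl, rfl⟩ | ⟨t', q1, heq, -⟩ | ⟨r₀, hr, hrhs, heq, hpp, rfl⟩ |
        ⟨r₀, qs, hr, hne, hql, heq, rfl, rfl⟩ | ⟨p0, heq, -⟩ | ⟨heq, -⟩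
    · cases hla : a.lab with
      | none => rw [hla] at hofl; simp [BHSym.ofLab] at hofl
      | some t' => rw [hla] at hofl; simp [BHSym.ofLab] at hofl
    · simp at heq
    · subst hpp
      obtain rfl : X = r₀.lhs := by simpa using heq
      obtain ⟨rfl, rfl⟩ := derivesL_nil (show DerivesL (BHGrammar G A) [] rsc' x from hrest)
      exact ⟨[r₀], [], Enc.nil r₀ hr hrhs _⟩
    · obtain rfl : X = r₀.lhs := by simpa using heq
      have hrr : (drule r₀ p qs).rhs = tripRHS p r₀.rhs qs := rfl
      rw [hrr] at hrest
      have hl' : rsc'.length ≤ n - 1 := by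
        simp only [List.length_cons] at hlen; omega
      have hn1 : n - 1 < n := by
        simp only [List.length_cons] at hlen; omega
      obtain ⟨ts, as, hencl⟩ := hlistaux (n - 1)
        (fun rsc h2 => (IH (n-1) hn1).1 rsc h2)
        (fun rsc h2 => (IH (n-1) hn1).2.1 rsc h2)
        rsc' hl' p r₀.rhs qs x hql hrest
      exact ⟨r₀ :: ts, as, Enc.rule r₀ hr hne p qs rsc' ts as hencl⟩
    all_goals simp at heq
  exact ⟨hterm, hnt, hlistaux n hterm hnt⟩

lemma decode_bar {qI : Q} : ∀ n (rsc : List (Rule T (BHNT T N Q) K)), rsc.length ≤ n →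
    ∀ (p : Q) x, DerivesL (BHGrammar G A) [Sum.inr (BHNT.trip qI BHSym.bar p)] rsc x →
    ∃ ts as, EncBar G A qI p rsc ts as := by
  intro n
  induction n using Nat.strong_induction_on with
  | _ n IH =>
  intro rsc hlen p x h
  obtain ⟨r, rsc', rfl, hmem, hlhs, hrest⟩ := derivesL_single h
  rcases bh_rule_cases G A hmem hlhs with
      ⟨a, ha, rfl, hofl, rfl, rfl⟩ | ⟨t', q1, heq, -⟩ | ⟨r₀, -, -, heq, -⟩ |
      ⟨r₀, qs, -, -, -, heq, -⟩ | ⟨p0, heq, hrr, -⟩ | ⟨heq, hrr, -⟩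
  · cases hla : a.lab with
    | none => rw [hla] at hofl; simp [BHSym.ofLab] at hofl
    | some t' => rw [hla] at hofl; simp [BHSym.ofLab] at hofl
  · simp at heq
  · simp at heq
  · simp at heq
  · -- b-rule
    subst hrr
    have hrr' : (brule (T := T) (N := N) (K := K) qI p0 p).rhs =
        [Sum.inr (BHNT.trip qI BHSym.bar p0)] ++
        [Sum.inr (BHNT.trip p0 BHSym.eps p)] := rfl
    rw [hrr'] at hrest
    obtain ⟨rsc1, rsc2, x1, x2, rfl, rfl, hD1, hD2⟩ := derivesL_split hrest _ _ rfl
    obtain ⟨e, he, hel, rfl, rfl, rfl, rfl⟩ := decode_eps G A hD2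
    have hl1 : rsc1.length < n := by
      simp only [List.length_cons, List.length_append, List.length_singleton] at hlen ⊢
      omega
    obtain ⟨ts, as, hbar⟩ := IH rsc1.length hl1 rsc1 le_rfl e.src x1 hD1
    exact ⟨ts, as ++ [e], EncBar.step e he hel rsc1 ts as hbar⟩
  · -- c-rule
    subst hrr
    have hrr' : (crule (Q := Q) G qI p).rhs =
        [Sum.inr (BHNT.trip qI (BHSym.nt G.start) p)] := rfl
    rw [hrr'] at hrest
    obtain ⟨ts, as, henc⟩ := (decode_aux G A rsc'.length).2.1 rsc' le_rfl qI p G.start x hrest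
    exact ⟨ts, as, EncBar.base p rsc' ts as henc⟩

end Decode
section Encode

variable {T N Q K : Type*} [CommSemiring K] (G : WCFG T N K) (A : WFSA T Q K)

lemma encode_term : ∀ (as : List (Arc T Q K)) (q0 q1 : Q) (t : T),
    ChainFrom A q0 as q1 → as.filterMap Arc.lab = [t] → NiceEnd as →
    ∃ rsc, Enc G A q0 (BHSym.term t) q1 rsc [] as := by
  intro as
  induction as with
  | nil => intro q0 q1 t hc hf hn; simp at hf
  | cons a as ih =>
    intro q0 q1 t hc hf hn
    obtain ⟨ha, rfl, hc'⟩ := chain_cons_inv hc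
    cases hla : a.lab with
    | some c =>
      rw [List.filterMap_cons_some hla, List.cons.injEq] at hf
      obtain ⟨rfl, hf'⟩ := hf
      have has : as = [] := by
        rcases as.eq_nil_or_concat with rfl | ⟨pre, e, hbs⟩
        · rfl
        · rw [List.concat_eq_append] at hbs
          subst hbs
          exact absurd (List.filterMap_eq_nil_iff.1 hf' e (by simp))
            (hn (a :: pre) e (by simp))
      subst has
      obtain rfl := chain_nil_inv hc'
      exact ⟨[frule a], Enc.arc a ha _ hla⟩
    | none =>
      rw [List.filterMap_cons_none hla] at hf
      have hne : as ≠ [] := by intro h; rw [h] at hf; simp at hf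
      obtain ⟨rsc', henc⟩ := ih a.dst q1 t hc' hf (niceEnd_tail hn)
      exact ⟨_, Enc.geps a ha hla t q1 rsc' as henc⟩

end Encode
section Encode2

variable {T N Q K : Type*} [CommSemiring K] (G : WCFG T N K) (A : WFSA T Q K)

lemma encode_aux : ∀ n : ℕ,
    ∀ (ts : List (Rule T N K)), ts.length ≤ n →
    ∀ (X : N) (as : List (Arc T Q K)) (q0 q1 : Q) (x : List T),
      DerivesL G [Sum.inr X] ts x → ChainFrom A q0 as q1 → as.filterMap Arc.lab = x →
      NiceEnd as → ∃ rsc, Enc G A q0 (BHSym.nt X) q1 rsc ts as := by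
  have hlist : ∀ m : ℕ,
      (∀ (ts : List (Rule T N K)), ts.length ≤ m →
        ∀ (X : N) (as : List (Arc T Q K)) (q0 q1 : Q) (x : List T),
        DerivesL G [Sum.inr X] ts x → ChainFrom A q0 as q1 → as.filterMap Arc.lab = x →
        NiceEnd as → ∃ rsc, Enc G A q0 (BHSym.nt X) q1 rsc ts as) →
      ∀ (syms : List (T ⊕ N)) (ts : List (Rule T N K)), ts.length ≤ m →
      ∀ (as : List (Arc T Q K)) (q0 q1 : Q) (x : List T),
        DerivesL G syms ts x → ChainFrom A q0 as q1 → as.filterMap Arc.lab = x →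
        NiceEnd as →
        ∃ qs rsc, EncList G A q0 syms qs rsc ts as ∧ qs.getLastD q0 = q1 := by
    intro m hsing syms
    induction syms with
    | nil =>
      intro ts hlen as q0 q1 x hD hc hf hn
      obtain ⟨rfl, rfl⟩ := derivesL_nil hD
      obtain rfl := eq_nil_of_niceEnd_of_filterMap_nil hn hf
      obtain rfl := chain_nil_inv hc
      exact ⟨[], [], EncList.nil _, rfl⟩
    | cons s ss ihs =>
      intro ts hlen as q0 q1 x hD hc hf hn
      obtain ⟨ts1, ts2, x1, x2, rfl, rfl, hD1, hD2⟩ := derivesL_split hD [s] ss rfl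
      obtain ⟨as1, as2, rfl, hf1, hf2, hnil1, hn1⟩ := split_arcs as x1 x2 hf
      have hn2 : NiceEnd as2 := by
        rcases eq_or_ne as2 [] with rfl | hne
        · exact niceEnd_nil
        · exact niceEnd_suffix hn hne
      obtain ⟨mq, hc1, hc2⟩ := chain_split hc
      have hl1 : ts1.length ≤ m := by
        rw [List.length_append] at hlen; omega
      have hl2 : ts2.length ≤ m := by
        rw [List.length_append] at hlen; omega
      have henc1 : ∃ rsc1 ts1', ts1 = ts1' ∧
          Enc G A q0 (BHSym.ofSym s) mq rsc1 ts1 as1 := by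
        cases s with
        | inl t =>
          obtain ⟨rfl, rfl⟩ := derivesL_terminal (z := [t]) hD1
          obtain ⟨rsc1, h1⟩ := encode_term G A as1 q0 mq t hc1 hf1 hn1
          exact ⟨rsc1, [], rfl, h1⟩
        | inr Y =>
          obtain ⟨rsc1, h1⟩ := hsing ts1 hl1 Y as1 q0 mq x1 hD1 hc1 hf1 hn1
          exact ⟨rsc1, ts1, rfl, h1⟩
      obtain ⟨rsc1, -, -, henc1⟩ := henc1
      obtain ⟨qs', rsc2, henc2, hgl⟩ := ihs ts2 hl2 as2 mq q1 x2 hD2 hc2 hf2 hn2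
      refine ⟨mq :: qs', rsc1 ++ rsc2,
        EncList.cons q0 s mq ss qs' rsc1 rsc2 ts1 ts2 as1 as2 henc1 henc2, ?_⟩
      rw [List.getLastD_cons]
      exact hgl
  intro n
  induction n using Nat.strong_induction_on with
  | _ n IH =>
  intro ts hlen X as q0 q1 x hD hc hf hn
  obtain ⟨r, ts', rfl, hr, hlhs, hD'⟩ := derivesL_single hD
  subst hlhs
  rcases eq_or_ne r.rhs [] with hrhs | hne
  · rw [hrhs] at hD'
    obtain ⟨rfl, rfl⟩ := derivesL_nil hD'
    obtain rfl := eq_nil_of_niceEnd_of_filterMap_nil hn hf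
    obtain rfl := chain_nil_inv hc
    exact ⟨[erule r _], Enc.nil r hr hrhs _⟩
  · have hn1 : 1 ≤ n := by
      rw [List.length_cons] at hlen; omega
    have hl' : ts'.length ≤ n - 1 := by
      rw [List.length_cons] at hlen; omega
    obtain ⟨qs, rsc2, hencl, hgl⟩ := hlist (n - 1)
      (fun ts'' h2 => IH (n - 1) (by omega) ts'' h2)
      r.rhs ts' hl' as q0 q1 x hD' hc hf hn
    subst hgl
    exact ⟨drule r q0 qs :: rsc2, Enc.rule r hr hne q0 qs rsc2 ts' as hencl⟩

lemma encode_bar {qI : Q} : ∀ (n : ℕ) (as : List (Arc T Q K)), as.length ≤ n →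
    ∀ (ts : List (Rule T N K)) (p : Q) (x : List T),
      DerivesL G [Sum.inr G.start] ts x → ChainFrom A qI as p →
      as.filterMap Arc.lab = x →
      ∃ rsc, EncBar G A qI p rsc ts as := by
  intro n
  induction n using Nat.strong_induction_on with
  | _ n IH =>
  intro as hlen ts p x hD hc hf
  rcases as.eq_nil_or_concat with rfl | ⟨pre, e, hbs⟩
  · obtain ⟨rsc, henc⟩ := encode_aux G A ts.length ts le_rfl G.start [] qI p x hD hc hf
      niceEnd_nil
    exact ⟨crule G qI p :: rsc, EncBar.base p rsc ts [] henc⟩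
  · rw [List.concat_eq_append] at hbs
    subst hbs
    obtain ⟨mq, hc1, hc2⟩ := chain_split hc
    obtain ⟨he, rfl, rfl⟩ := chain_singleton hc2
    cases hle : e.lab with
    | none =>
      have hf' : pre.filterMap Arc.lab = x := by
        rw [← hf]; simp [List.filterMap_append, hle]
      have hlp : pre.length < n := by
        rw [List.length_append] at hlen; simp at hlen; omega
      obtain ⟨rsc', hbar⟩ := IH pre.length hlp pre le_rfl ts e.src x hD hc1 hf'
      exact ⟨_, EncBar.step e he hle rsc' ts pre hbar⟩
    | some t =>
      have hn : NiceEnd (pre ++ [e]) := by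
        intro pre' e' heq
        rw [← concat_last_eq heq]
        simp [hle]
      obtain ⟨rsc, henc⟩ := encode_aux G A ts.length ts le_rfl G.start (pre ++ [e])
        qI e.dst x hD hc hf hn
      exact ⟨crule G qI e.dst :: rsc, EncBar.base e.dst rsc ts (pre ++ [e]) henc⟩

end Encode2
section Uniq1

variable {T N Q K : Type*} [CommSemiring K] (G : WCFG T N K) (A : WFSA T Q K)

lemma ofLab_inj {l l' : Option T} (h : (BHSym.ofLab l : BHSym T N) = BHSym.ofLab l') :
    l = l' := by
  cases l <;> cases l' <;> simp_all [BHSym.ofLab]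

lemma ofSym_inj {s s' : T ⊕ N} (h : BHSym.ofSym s = BHSym.ofSym s') : s = s' := by
  cases s <;> cases s' <;> simp_all [BHSym.ofSym]

lemma frule_inj {a a' : Arc T Q K} (h : (frule a : Rule T (BHNT T N Q) K) = frule a') :
    a = a' := by
  rcases a with ⟨s1, l1, w1, d1⟩
  rcases a' with ⟨s2, l2, w2, d2⟩
  simp only [frule, Rule.mk.injEq, BHNT.trip.injEq] at h
  obtain ⟨⟨rfl, hl, rfl⟩, -, rfl⟩ := h
  obtain rfl := ofLab_inj hl
  rfl

lemma tripRHS_ne_nil {q0 : Q} {s : T ⊕ N} {ss : List (T ⊕ N)} {qs : List Q}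
    (hlen : qs.length = (s :: ss).length) : tripRHS q0 (s :: ss) qs ≠ [] := by
  cases qs with
  | nil => simp at hlen
  | cons q qs' =>
    intro h
    have : (Sum.inr (BHNT.trip q0 (BHSym.ofSym s) q) :: tripRHS q ss qs' :
        List (T ⊕ BHNT T N Q)) = [] := h
    simp at this

lemma tripRHS_inj : ∀ (syms : List (T ⊕ N)) (qs : List Q) (syms' : List (T ⊕ N))
    (qs' : List Q) (q0 : Q), qs.length = syms.length → qs'.length = syms'.length →
    tripRHS q0 syms qs = tripRHS q0 syms' qs' → syms = syms' ∧ qs = qs' := by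
  intro syms
  induction syms with
  | nil =>
    intro qs syms' qs' q0 h1 h2 h
    obtain rfl : qs = [] := List.length_eq_zero_iff.1 h1
    cases syms' with
    | nil =>
      obtain rfl : qs' = [] := List.length_eq_zero_iff.1 h2
      exact ⟨rfl, rfl⟩
    | cons s' ss' => exact absurd h.symm (tripRHS_ne_nil h2)
  | cons s ss ih =>
    intro qs syms' qs' q0 h1 h2 h
    cases qs with
    | nil => simp at h1
    | cons q qs0 =>
      cases syms' with
      | nil =>
        obtain rfl : qs' = [] := List.length_eq_zero_iff.1 h2
        exact absurd h (tripRHS_ne_nil h1)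
      | cons s' ss' =>
        cases qs' with
        | nil => simp at h2
        | cons q' qs0' =>
          have h' : (Sum.inr (BHNT.trip q0 (BHSym.ofSym s) q) :: tripRHS q ss qs0 :
              List (T ⊕ BHNT T N Q)) =
              Sum.inr (BHNT.trip q0 (BHSym.ofSym s') q') :: tripRHS q' ss' qs0' := h
          rw [List.cons.injEq] at h'
          obtain ⟨hh, htl⟩ := h'
          simp only [Sum.inr.injEq, BHNT.trip.injEq] at hh
          obtain ⟨-, hsym, rfl⟩ := hh
          obtain rfl := ofSym_inj hsym
          obtain ⟨rfl, rfl⟩ := ih qs0 ss' qs0' q (by simpa using h1) (by simpa using h2) htl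
          exact ⟨rfl, rfl⟩

lemma enc_term_as_ne {q0 : Q} {t : T} {q1 : Q} {rsc ts as}
    (h : Enc G A q0 (BHSym.term t) q1 rsc ts as) : as ≠ [] := by
  rcases enc_inv G A h with
      ⟨a, t', -, -, -, -, -, -, -, rfl⟩ | ⟨e, t', rsc', as', -, -, -, -, -, -, rfl, -⟩ |
      ⟨r, -, -, heq, -, -, -, -⟩ | ⟨r, qs, rsc', ts', -, -, heq, -, -, -, -⟩ <;> simp_all

lemma encList_qlen {q0 : Q} {syms : List (T ⊕ N)} {qs : List Q} {rsc ts as}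
    (h : EncList G A q0 syms qs rsc ts as) : qs.length = syms.length :=
  (encList_sound G A h).2.2.2.2.2

end Uniq1
section Uniq2

variable {T N Q K : Type*} [CommSemiring K] (G : WCFG T N K) (A : WFSA T Q K)

lemma rule_ext {r r' : Rule T N K} (h1 : r.lhs = r'.lhs) (h2 : r.rhs = r'.rhs)
    (h3 : r.wt = r'.wt) : r = r' := by
  rcases r with ⟨l, rh, w⟩
  rcases r' with ⟨l', rh', w'⟩
  simp_all

lemma encRU : ∀ n : ℕ,
    (∀ (q0 : Q) (s : BHSym T N) (q1 : Q) rsc ts as ts' as', rsc.length ≤ n →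
      Enc G A q0 s q1 rsc ts as → Enc G A q0 s q1 rsc ts' as' → ts = ts' ∧ as = as') ∧
    (∀ (q0 : Q) syms (qs qs' : List Q) rsc ts as ts' as', rsc.length ≤ n →
      EncList G A q0 syms qs rsc ts as → EncList G A q0 syms qs' rsc ts' as' →
      qs = qs' ∧ ts = ts' ∧ as = as') := by
  intro n
  induction n using Nat.strong_induction_on with
  | _ n IH =>
  have hsingle : ∀ (q0 : Q) (s : BHSym T N) (q1 : Q) rsc ts as ts' as', rsc.length ≤ n →
      Enc G A q0 s q1 rsc ts as → Enc G A q0 s q1 rsc ts' as' → ts = ts' ∧ as = as' := by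
    intro q0 s q1 rsc ts as ts' as' hlen h1 h2
    rcases enc_inv G A h1 with
        ⟨a, t, ha, hla, rfl, rfl, rfl, rfl, rfl, rfl⟩ |
        ⟨e, t, rsc1, as1, he, hle, rfl, rfl, rfl, rfl, rfl, hsub⟩ |
        ⟨r, hr, hrhs, rfl, rfl, rfl, rfl, rfl⟩ |
        ⟨r, qs, rsc1, ts1, hr, hne, rfl, rfl, rfl, rfl, hlist⟩
    · -- h1 arc
      rcases enc_inv G A h2 with
          ⟨a2, t2, ha2, hla2, he1, he2, he3, he4, rfl, rfl⟩ |
          ⟨e2, t2, rsc2, as2, he2m, hle2, he1, he2', he4, rfl, rfl, hsub2⟩ |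
          ⟨r2, hr2, hrhs2, heq2, hq2, he4, rfl, rfl⟩ |
          ⟨r2, qs2, rsc2, ts2, hr2, hne2, heq2, hq2, he4, rfl, hlist2⟩
      · obtain rfl := frule_inj (show (frule a : Rule T (BHNT T N Q) K) = frule a2 by
          simpa using he4)
        exact ⟨rfl, rfl⟩
      · simp at he4
      · simp at heq2
      · simp at heq2
    · -- h1 geps
      rcases enc_inv G A h2 with
          ⟨a2, t2, ha2, hla2, he1, he2, he3, he4, rfl, rfl⟩ |
          ⟨e2, t2, rsc2, as2, he2m, hle2, he1, he2', he4, rfl, rfl, hsub2⟩ |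
          ⟨r2, hr2, hrhs2, heq2, hq2, he4, rfl, rfl⟩ |
          ⟨r2, qs2, rsc2, ts2, hr2, hne2, heq2, hq2, he4, rfl, hlist2⟩
      · simp at he4
      · obtain rfl : t = t2 := by simpa using he2'
        injection he4 with hg hf
        injection hf with hf hrsc
        obtain rfl := frule_inj hf
        subst hrsc
        have hl1 : rsc1.length < n := by simp at hlen; omega
        obtain ⟨-, rfl⟩ := (IH rsc1.length hl1).1 _ _ _ _ _ _ _ _ le_rfl hsub hsub2
        exact ⟨rfl, rfl⟩
      · simp at heq2
      · simp at heq2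
    · -- h1 nil
      rcases enc_inv G A h2 with
          ⟨a2, t2, ha2, hla2, he1, he2, he3, he4, rfl, rfl⟩ |
          ⟨e2, t2, rsc2, as2, he2m, hle2, he1, he2', he4, rfl, rfl, hsub2⟩ |
          ⟨r2, hr2, hrhs2, heq2, hq2, he4, rfl, rfl⟩ |
          ⟨r2, qs2, rsc2, ts2, hr2, hne2, heq2, hq2, he4, rfl, hlist2⟩
      · simp at he2
      · simp at he2'
      · have hlh : r.lhs = r2.lhs := by simpa using heq2
        injection he4 with hh htl0
        have hwt : r.wt = r2.wt := by
          simpa [erule] using congrArg Rule.wt hh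
        obtain rfl := rule_ext hlh (hrhs.trans hrhs2.symm) hwt
        exact ⟨rfl, rfl⟩
      · injection he4 with hh htl
        have hrhseq := congrArg Rule.rhs hh
        simp only [erule, drule] at hrhseq
        cases hrr : r2.rhs with
        | nil => exact absurd hrr hne2
        | cons s0 ss0 =>
          rw [hrr] at hrhseq
          exact absurd hrhseq.symm (tripRHS_ne_nil (hrr ▸ encList_qlen G A hlist2))
    · -- h1 rule
      rcases enc_inv G A h2 with
          ⟨a2, t2, ha2, hla2, he1, he2, he3, he4, rfl, rfl⟩ |
          ⟨e2, t2, rsc2, as2, he2m, hle2, he1, he2', he4, rfl, rfl, hsub2⟩ |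
          ⟨r2, hr2, hrhs2, heq2, hq2, he4, rfl, rfl⟩ |
          ⟨r2, qs2, rsc2, ts2, hr2, hne2, heq2, hq2, he4, rfl, hlist2⟩
      · simp at he2
      · simp at he2'
      · injection he4 with hh htl0
        have hrhseq := congrArg Rule.rhs hh
        simp only [erule, drule] at hrhseq
        cases hrr : r.rhs with
        | nil => exact absurd hrr hne
        | cons s0 ss0 =>
          rw [hrr] at hrhseq
          exact absurd hrhseq (tripRHS_ne_nil (hrr ▸ encList_qlen G A hlist))
      · injection he4 with hh htl
        have hlhs : r.lhs = r2.lhs := by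
          have := congrArg Rule.lhs hh
          simp only [drule, BHNT.trip.injEq] at this
          exact BHSym.nt.inj this.2.1
        have hrhseq : tripRHS q0 r.rhs qs = tripRHS q0 r2.rhs qs2 := by
          simpa [drule] using congrArg Rule.rhs hh
        obtain ⟨hrr, rfl⟩ := tripRHS_inj r.rhs qs r2.rhs qs2 q0
          (encList_qlen G A hlist) (encList_qlen G A hlist2) hrhseq
        have hwt : r.wt = r2.wt := by simpa [drule] using congrArg Rule.wt hh
        obtain rfl := rule_ext hlhs hrr hwt
        subst htl
        have hl1 : rsc1.length < n := by simp at hlen; omega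
        obtain ⟨-, rfl, rfl⟩ :=
          (IH rsc1.length hl1).2 _ _ _ _ _ _ _ _ _ le_rfl hlist hlist2
        exact ⟨rfl, rfl⟩
  refine ⟨hsingle, ?_⟩
  intro q0 syms
  induction syms generalizing q0 with
  | nil =>
    intro qs qs' rsc ts as ts' as' hlen hl1 hl2
    obtain ⟨rfl, rfl, rfl, rfl⟩ := encList_nil_inv G A hl1
    obtain ⟨rfl, -, rfl, rfl⟩ := encList_nil_inv G A hl2
    exact ⟨rfl, rfl, rfl⟩
  | cons s ss ihs =>
    intro qs qs' rsc ts as ts' as' hlen hl1 hl2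
    obtain ⟨m1, qs1, rsc1, rsc2, ts1, ts2, as1, as2, rfl, rfl, rfl, rfl, henc1, hrest1⟩ :=
      encList_cons_inv G A hl1
    obtain ⟨m2, qs2, rsc1', rsc2', ts1', ts2', as1', as2', rfl, hr2, rfl, rfl, henc2, hrest2⟩ :=
      encList_cons_inv G A hl2
    obtain ⟨hd1, tl1, rfl, hlhs1⟩ := enc_head G A henc1
    obtain ⟨hd2, tl2, rfl, hlhs2⟩ := enc_head G A henc2
    have hhd : hd1 = hd2 := by
      have h' : hd1 :: (tl1 ++ rsc2) = hd2 :: (tl2 ++ rsc2') := by simpa using hr2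
      rw [List.cons.injEq] at h'
      exact h'.1
    obtain rfl : m1 = m2 := by
      have h12 : BHNT.trip q0 (BHSym.ofSym s) m1 = BHNT.trip q0 (BHSym.ofSym s) m2 := by
        rw [← hlhs1, hhd, hlhs2]
      simpa using h12
    have hcap1 := (enc_sound G A henc1).2.2.1
    have hcap2 := (enc_sound G A henc2).2.2.1
    have heq1 : (hd1 :: tl1) = (hd2 :: tl2) ∧ rsc2 = rsc2' := by
      rcases List.append_eq_append_iff.1 hr2 with ⟨c, hc1, hc2⟩ | ⟨c, hc1, hc2⟩
      · rw [hc1] at hcap2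
        obtain ⟨rfl, -⟩ := derivesL_ext hcap1 hcap2
        rw [List.append_nil] at hc1
        exact ⟨hc1.symm, by simpa using hc2⟩
      · rw [hc1] at hcap1
        obtain ⟨rfl, -⟩ := derivesL_ext hcap2 hcap1
        rw [List.append_nil] at hc1
        exact ⟨hc1, by simpa using hc2.symm⟩
    obtain ⟨heq1', rfl⟩ := heq1
    rw [← heq1'] at henc2
    have hlen1 : (hd1 :: tl1).length ≤ n := by
      simp only [List.length_append] at hlen; omega
    have hlen2 : rsc2.length ≤ n := by
      simp only [List.length_append] at hlen; omega
    obtain ⟨rfl, rfl⟩ := hsingle _ _ _ _ _ _ _ _ hlen1 henc1 henc2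
    obtain ⟨rfl, rfl, rfl⟩ := ihs _ _ _ _ _ _ _ _ hlen2 hrest1 hrest2
    exact ⟨rfl, rfl, rfl⟩

end Uniq2
section Uniq3

variable {T N Q K : Type*} [CommSemiring K] (G : WCFG T N K) (A : WFSA T Q K)

lemma ext_nil_of_nice {as ext : List (Arc T Q K)} (h : NiceEnd (as ++ ext))
    (hf : ext.filterMap Arc.lab = []) : ext = [] := by
  rcases ext.eq_nil_or_concat with rfl | ⟨pre, e, hbs⟩
  · rfl
  · rw [List.concat_eq_append] at hbs
    subst hbs
    exact absurd (List.filterMap_eq_nil_iff.1 hf e (by simp))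
      (h (as ++ pre) e (by rw [List.append_assoc]))

lemma encLU : ∀ n1 n2 : ℕ,
    (∀ (q0 : Q) (s : BHSym T N) (q1 : Q) rsc rsc' ts as, ts.length ≤ n1 →
      as.length ≤ n2 → Enc G A q0 s q1 rsc ts as → Enc G A q0 s q1 rsc' ts as →
      rsc = rsc') ∧
    (∀ (q0 : Q) syms (qs qs' : List Q) rsc rsc' ts as, ts.length ≤ n1 →
      as.length ≤ n2 → EncList G A q0 syms qs rsc ts as →
      EncList G A q0 syms qs' rsc' ts as → qs = qs' ∧ rsc = rsc') := by
  intro n1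
  induction n1 using Nat.strong_induction_on with
  | _ n1 IH1 =>
  intro n2
  induction n2 using Nat.strong_induction_on with
  | _ n2 IH2 =>
  have hsingle : ∀ (q0 : Q) (s : BHSym T N) (q1 : Q) rsc rsc' ts as, ts.length ≤ n1 →
      as.length ≤ n2 → Enc G A q0 s q1 rsc ts as → Enc G A q0 s q1 rsc' ts as →
      rsc = rsc' := by
    intro q0 s q1 rsc rsc' ts as hl1 hl2 h1 h2
    rcases enc_inv G A h1 with
        ⟨a, t, ha, hla, rfl, rfl, rfl, rfl, rfl, rfl⟩ |
        ⟨e, t, rsc1, as1, he, hle, rfl, rfl, rfl, rfl, rfl, hsub⟩ |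
        ⟨r, hr, hrhs, rfl, rfl, rfl, rfl, rfl⟩ |
        ⟨r, qs, rsc1, ts1, hr, hne, rfl, rfl, rfl, rfl, hlist1⟩
    · -- h1 arc
      rcases enc_inv G A h2 with
          ⟨a2, t2, ha2, hla2, he1, he2, he3, rfl, hts, has⟩ |
          ⟨e2, t2, rsc2, as2, he2m, hle2, he1, he2', rfl, hts, has, hsub2⟩ |
          ⟨r2, hr2, hrhs2, heq2, hq2, rfl, hts, has⟩ |
          ⟨r2, qs2, rsc2, ts2, hr2, hne2, heq2, hq2, rfl, hts, hlist2⟩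
      · obtain rfl : a = a2 := by simpa using has
        rfl
      · exfalso
        rw [List.cons.injEq] at has
        exact enc_term_as_ne G A hsub2 has.2.symm
      · simp at heq2
      · simp at heq2
    · -- h1 geps
      rcases enc_inv G A h2 with
          ⟨a2, t2, ha2, hla2, he1, he2, he3, rfl, hts, has⟩ |
          ⟨e2, t2, rsc2, as2, he2m, hle2, he1, he2', rfl, hts, has, hsub2⟩ |
          ⟨r2, hr2, hrhs2, heq2, hq2, rfl, hts, has⟩ |
          ⟨r2, qs2, rsc2, ts2, hr2, hne2, heq2, hq2, rfl, hts, hlist2⟩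
      · exfalso
        rw [List.cons.injEq] at has
        exact enc_term_as_ne G A hsub has.2
      · obtain rfl : t = t2 := by simpa using he2'
        rw [List.cons.injEq] at has
        obtain ⟨rfl, rfl⟩ := has
        have hl2' : as1.length < n2 := by simp at hl2; omega
        obtain rfl := ((IH2 as1.length hl2').1) _ _ _ _ _ _ _ hl1 le_rfl hsub hsub2
        rfl
      · simp at heq2
      · simp at heq2
    · -- h1 nil
      rcases enc_inv G A h2 with
          ⟨a2, t2, ha2, hla2, he1, he2, he3, rfl, hts, has⟩ |
          ⟨e2, t2, rsc2, as2, he2m, hle2, he1, he2', rfl, hts, has, hsub2⟩ |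
          ⟨r2, hr2, hrhs2, heq2, hq2, rfl, hts, has⟩ |
          ⟨r2, qs2, rsc2, ts2, hr2, hne2, heq2, hq2, rfl, hts, hlist2⟩
      · simp at he2
      · simp at he2'
      · obtain rfl : r = r2 := by simpa using hts
        rfl
      · exfalso
        rw [List.cons.injEq] at hts
        obtain ⟨rfl, hts2⟩ := hts
        exact hne2 hrhs
    · -- h1 rule
      rcases enc_inv G A h2 with
          ⟨a2, t2, ha2, hla2, he1, he2, he3, rfl, hts, has⟩ |
          ⟨e2, t2, rsc2, as2, he2m, hle2, he1, he2', rfl, hts, has, hsub2⟩ |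
          ⟨r2, hr2, hrhs2, heq2, hq2, rfl, hts, has⟩ |
          ⟨r2, qs2, rsc2, ts2, hr2, hne2, heq2, hq2, rfl, hts, hlist2⟩
      · simp at he2
      · simp at he2'
      · exfalso
        rw [List.cons.injEq] at hts
        obtain ⟨rfl, hts2⟩ := hts
        exact hne hrhs2
      · rw [List.cons.injEq] at hts
        obtain ⟨rfl, rfl⟩ := hts
        have hn1' : 1 ≤ n1 := by simp at hl1; omega
        have hts1 : ts1.length ≤ n1 - 1 := by simp at hl1; omega
        obtain ⟨rfl, rfl⟩ := (IH1 (n1 - 1) (by omega) n2).2 _ _ _ _ _ _ _ _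
          hts1 hl2 hlist1 hlist2
        rfl
  refine ⟨hsingle, ?_⟩
  intro q0 syms
  induction syms generalizing q0 with
  | nil =>
    intro qs qs' rsc rsc' ts as hl1 hl2 he1 he2
    obtain ⟨rfl, rfl, rfl, rfl⟩ := encList_nil_inv G A he1
    obtain ⟨rfl, rfl, -, -⟩ := encList_nil_inv G A he2
    exact ⟨rfl, rfl⟩
  | cons s ss ihs =>
    intro qs qs' rsc rsc' ts as hl1 hl2 he1 he2
    obtain ⟨m1, qs1, rsc1, rsc2, ts1, ts2, as1, as2, rfl, rfl, rfl, rfl, henc1, hrest1⟩ :=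
      encList_cons_inv G A he1
    obtain ⟨m2, qs2, rsc1', rsc2', ts1', ts2', as1', as2', rfl, rfl, hts, has, henc2, hrest2⟩ :=
      encList_cons_inv G A he2
    have hG1 := (enc_sound G A henc1).2.1
    have hG2 := (enc_sound G A henc2).2.1
    -- align the rule lists
    obtain ⟨rfl, hx⟩ : ts1 = ts1' ∧
        as1'.filterMap Arc.lab = as1.filterMap Arc.lab := by
      rcases List.append_eq_append_iff.1 hts with ⟨c, hc1, hc2⟩ | ⟨c, hc1, hc2⟩
      · rw [hc1] at hG2
        obtain ⟨rfl, hyld⟩ := derivesL_ext hG1 hG2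
        rw [List.append_nil] at hc1
        exact ⟨hc1.symm, hyld⟩
      · rw [hc1] at hG1
        obtain ⟨rfl, hyld⟩ := derivesL_ext hG2 hG1
        rw [List.append_nil] at hc1
        exact ⟨hc1, hyld.symm⟩
    -- align the arc lists
    obtain rfl : as1 = as1' := by
      rcases List.append_eq_append_iff.1 has with ⟨c, hc1, hc2⟩ | ⟨c, hc1, hc2⟩
      · -- as1' = as1 ++ c
        have hfc : c.filterMap Arc.lab = [] := by
          rw [hc1, List.filterMap_append] at hx
          have := congrArg List.length hx
          simp only [List.length_append] at this
          exact List.length_eq_zero_iff.1 (by omega)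
        have hnice := (enc_sound G A henc2).2.2.2.2
        rw [hc1] at hnice
        obtain rfl := ext_nil_of_nice hnice hfc
        rw [List.append_nil] at hc1
        exact hc1.symm
      · -- as1 = as1' ++ c
        have hfc : c.filterMap Arc.lab = [] := by
          rw [hc1, List.filterMap_append] at hx
          have := congrArg List.length hx
          simp only [List.length_append] at this
          exact List.length_eq_zero_iff.1 (by omega)
        have hnice := (enc_sound G A henc1).2.2.2.2
        rw [hc1] at hnice
        obtain rfl := ext_nil_of_nice hnice hfc
        rw [List.append_nil] at hc1
        exact hc1
    obtain rfl : ts2 = ts2' := List.append_cancel_left hts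
    obtain rfl : as2 = as2' := List.append_cancel_left has
    obtain rfl : m1 = m2 :=
      chain_det (enc_sound G A henc1).1 (enc_sound G A henc2).1
    have hlt : ts1.length ≤ n1 := by
      simp only [List.length_append] at hl1; omega
    have hlt2 : ts2.length ≤ n1 := by
      simp only [List.length_append] at hl1; omega
    have hla : as1.length ≤ n2 := by
      simp only [List.length_append] at hl2; omega
    have hla2 : as2.length ≤ n2 := by
      simp only [List.length_append] at hl2; omega
    obtain rfl := hsingle _ _ _ _ _ _ _ hlt hla henc1 henc2
    obtain ⟨rfl, rfl⟩ := ihs _ _ _ _ _ _ _ hlt2 hla2 hrest1 hrest2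
    exact ⟨rfl, rfl⟩

end Uniq3
section BarUniq

variable {T N Q K : Type*} [CommSemiring K] (G : WCFG T N K) (A : WFSA T Q K)

lemma concat_init_eq {α : Type*} {l1 l2 : List α} {x y : α}
    (h : l1 ++ [x] = l2 ++ [y]) : l1 = l2 := by
  have := congrArg List.dropLast h
  simpa [List.dropLast_concat] using this

lemma encBarRU {qI : Q} : ∀ (n : ℕ) (rsc : List (Rule T (BHNT T N Q) K)),
    rsc.length ≤ n → ∀ (p : Q) ts as ts' as',
    EncBar G A qI p rsc ts as → EncBar G A qI p rsc ts' as' →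
    ts = ts' ∧ as = as' := by
  intro n
  induction n using Nat.strong_induction_on with
  | _ n IH =>
  intro rsc hlen p ts as ts' as' h1 h2
  rcases encBar_inv G A h1 with ⟨rsc1, rfl, henc1⟩ |
      ⟨e, rsc1, as1, he, hle, rfl, rfl, rfl, hbar1⟩
  · rcases encBar_inv G A h2 with ⟨rsc2, heq, henc2⟩ |
        ⟨e2, rsc2, as2, he2, hle2, hpe2, heq, hase, hbar2⟩
    · injection heq with hh htl
      obtain rfl := htl
      exact (encRU G A rsc1.length).1 _ _ _ _ _ _ _ _ le_rfl henc1 henc2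
    · injection heq with hh htl
      exact absurd (congrArg Rule.rhs hh) (by simp [crule, brule])
  · rcases encBar_inv G A h2 with ⟨rsc2, heq, henc2⟩ |
        ⟨e2, rsc2, as2, he2, hle2, hpe2, heq, hase, hbar2⟩
    · injection heq with hh htl
      exact absurd (congrArg Rule.rhs hh) (by simp [crule, brule])
    · injection heq with hhd htl
      obtain rfl : e = e2 := frule_inj (concat_last_eq htl)
      obtain rfl : rsc1 = rsc2 := concat_init_eq htl
      have hl1 : rsc1.length < n := by simp at hlen; omega
      obtain ⟨rfl, rfl⟩ := IH rsc1.length hl1 rsc1 le_rfl e.src _ _ _ _ hbar1 hbar2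
      exact ⟨rfl, hase.symm⟩

lemma encBarLU {qI : Q} : ∀ (n : ℕ) (as : List (Arc T Q K)),
    as.length ≤ n → ∀ (p : Q) rsc rsc' ts,
    EncBar G A qI p rsc ts as → EncBar G A qI p rsc' ts as → rsc = rsc' := by
  intro n
  induction n using Nat.strong_induction_on with
  | _ n IH =>
  intro as hlen p rsc rsc' ts h1 h2
  rcases encBar_inv G A h1 with ⟨rsc1, rfl, henc1⟩ |
      ⟨e, rsc1, as1, he, hle, rfl, rfl, rfl, hbar1⟩
  · rcases encBar_inv G A h2 with ⟨rsc2, rfl, henc2⟩ |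
        ⟨e2, rsc2, as2, he2, hle2, hpe2, rfl, hase, hbar2⟩
    · obtain rfl := (encLU G A ts.length as.length).1 _ _ _ _ _ _ _
        le_rfl le_rfl henc1 henc2
      rfl
    · exact absurd hle2 ((enc_sound G A henc1).2.2.2.2 as2 e2 hase)
  · rcases encBar_inv G A h2 with ⟨rsc2, rfl, henc2⟩ |
        ⟨e2, rsc2, as2, he2, hle2, hpe2, rfl, hase, hbar2⟩
    · exact absurd hle ((enc_sound G A henc2).2.2.2.2 as1 e rfl)
    · obtain rfl : e = e2 := concat_last_eq hase
      obtain rfl : as1 = as2 := concat_init_eq hase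
      have hl1 : as1.length < n := by simp at hlen; omega
      obtain rfl := IH as1.length hl1 as1 le_rfl e.src _ _ _ hbar1 hbar2
      rfl

lemma derivFrom_ext {α : List (T ⊕ N)} {d d' : DerivFrom G α}
    (h : d.rules = d'.rules) : d = d' := by
  rcases d with ⟨rs, y, hok⟩
  rcases d' with ⟨rs', y', hok'⟩
  simp only at h
  subst h
  obtain rfl := derivesL_det hok hok'
  rfl

lemma subPath_ext {p q : Q} {π π' : SubPath A p q} (h : π.arcs = π'.arcs) : π = π' := by
  rcases π with ⟨as, hok⟩
  rcases π' with ⟨as', hok'⟩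
  simp only at h
  subst h
  rfl

end BarUniq
/-- **Lemma B.2.**  For any triplet nonterminal `(qI, S̄, q)` of the
generalized Bar-Hillel grammar `G∩` with `qI ∈ I` and `q ∈ Q`, there is a
bijection `ξ` from the subderivations of `G∩` rooted at `(qI, S̄, q)` to the
weighted join of the subderivations of `G` rooted at `S` with the subpaths of
`A` from `qI` to `q`; `ξ` preserves yields, and the weight of a subderivation
of `G∩` is the `⊗`-product of the weights of the corresponding subderivation
and subpath. -/
theorem bar_hillel_bar_bijection
    {T N Q K : Type*} [CommSemiring K] [Finite N] [Finite Q]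
    (G : WCFG T N K) (A : WFSA T Q K) (hGfin : G.rules.Finite)
    (qI q : Q) (hqI : A.init qI ≠ 0) :
    ∃ ξ : Deriv (BHGrammar G A) (BHNT.trip qI BHSym.bar q) →
        {p : SubDeriv G (BHSym.nt G.start) × SubPath A qI q //
          p.1.yield = p.2.yield},
      Function.Bijective ξ ∧
      ∀ d, (ξ d).1.1.yield = d.yield ∧ (ξ d).1.2.yield = d.yield ∧
        d.weight = (ξ d).1.1.weight * (ξ d).1.2.weight := by
  classical
  -- decode every derivation into a pair
  have hdec : ∀ d : Deriv (BHGrammar G A) (BHNT.trip qI BHSym.bar q),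
      ∃ p : {p : SubDeriv G (BHSym.nt G.start) × SubPath A qI q //
          p.1.yield = p.2.yield},
        EncBar G A qI q d.rules p.1.1.rules p.1.2.arcs := by
    intro d
    obtain ⟨ts, as, hbar⟩ := decode_bar G A d.rules.length d.rules le_rfl q d.yield d.ok
    obtain ⟨hchain, hG, hcap, hwt⟩ := encBar_sound G A hqI hbar
    exact ⟨⟨⟨⟨ts, as.filterMap Arc.lab, hG⟩, ⟨as, hchain⟩⟩, rfl⟩, hbar⟩
  refine ⟨fun d => (hdec d).choose, ⟨?_, ?_⟩, ?_⟩
  · -- injective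
    intro d1 d2 heq
    have heq' : (hdec d1).choose = (hdec d2).choose := heq
    have h1 := (hdec d1).choose_spec
    have h2 := (hdec d2).choose_spec
    rw [heq'] at h1
    exact derivFrom_ext _ (encBarLU G A ((hdec d2).choose.1.2.arcs).length _
      le_rfl q _ _ _ h1 h2)
  · -- surjective
    intro p
    obtain ⟨⟨t, π⟩, hy⟩ := p
    have hfm : π.arcs.filterMap Arc.lab = t.yield := hy.symm
    obtain ⟨rsc, hbar⟩ := encode_bar G A π.arcs.length π.arcs le_rfl t.rules q
      t.yield t.ok π.ok hfm
    obtain ⟨hchain, hG, hcap, hwt⟩ := encBar_sound G A hqI hbar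
    have hyd : t.yield = π.arcs.filterMap Arc.lab := hy
    refine ⟨⟨rsc, t.yield, by rw [hyd]; exact hcap⟩, ?_⟩
    have hspec := (hdec ⟨rsc, t.yield, by rw [hyd]; exact hcap⟩).choose_spec
    set p' := (hdec ⟨rsc, t.yield, by rw [hyd]; exact hcap⟩).choose with hp'
    obtain ⟨hts, has⟩ := encBarRU G A rsc.length rsc le_rfl q _ _ _ _ hspec hbar
    refine Subtype.ext (Prod.ext ?_ ?_)
    · exact derivFrom_ext G hts
    · exact subPath_ext A has
  · -- yields and weights
    intro d
    have hspec := (hdec d).choose_spec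
    obtain ⟨hchain, hG, hcap, hwt⟩ := encBar_sound G A hqI hspec
    have hy1 : (hdec d).choose.1.1.yield =
        ((hdec d).choose.1.2.arcs).filterMap Arc.lab :=
      derivesL_det (hdec d).choose.1.1.ok hG
    have hyd : d.yield = ((hdec d).choose.1.2.arcs).filterMap Arc.lab :=
      derivesL_det d.ok hcap
    refine ⟨by rw [hy1, hyd], by rw [hyd]; rfl, ?_⟩
    show (d.rules.map Rule.wt).prod = _
    rw [hwt]
    rfl
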